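/- arXiv:1812.00951 — 3 statements merged into one kernel-verified Lean document; each statement's English description precedes it below -/
import Mathlib

section
/- Let X and Y be real Banach spaces, U an open subset of X, and f : U → Y a continuous map with a pseudo-Jacobian mapping Jf satisfying the chain rule condition on U. If sur Jf(x₀) > 0 for some x₀ ∈ U, then f is open with linear rate around x₀; more precisely, for each 0 < α < sur Jf(x₀) there is a neighborhood V of x₀ such that for every x ∈ V and every r > 0 with B(x;r) ⊆ V one has B(f(x); αr) ⊆ f(B(x;r)). -/
open Filter Topology Metric Set MeasureTheory

noncomputable section

variable {X Y : Type*} [NormedAddCommGroup X] [NormedSpace ℝ X]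
  [NormedAddCommGroup Y] [NormedSpace ℝ Y]

/-- The upper right-hand Dini derivative of `φ` at `x` in the direction `v`. -/
def diniPlus (φ : X → ℝ) (x v : X) : ℝ :=
  Filter.limsup (fun t : ℝ => (φ (x + t • v) - φ x) / t) (𝓝[>] (0 : ℝ))

/-- `J` is a pseudo-Jacobian of `f` at `x`. -/
def IsPseudoJacobianAt (f : X → Y) (x : X) (J : Set (X →L[ℝ] Y)) : Prop :=
  J.Nonempty ∧ ∀ (y' : StrongDual ℝ Y) (v : X),
    diniPlus (fun z => y' (f z)) x v ≤ sSup ((fun T : X →L[ℝ] Y => y' (T v)) '' J)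

/-- The Clarke generalized directional derivative of `φ` at `x` in the direction `v`. -/
def clarkeDeriv (φ : X → ℝ) (x v : X) : ℝ :=
  Filter.limsup (fun p : X × ℝ => (φ (p.1 + p.2 • v) - φ p.1) / p.2)
    ((𝓝 x) ×ˢ (𝓝[>] (0 : ℝ)))

/-- The Clarke subdifferential of `φ` at `x`. -/
def clarkeSubdiff (φ : X → ℝ) (x : X) : Set (StrongDual ℝ X) :=
  {x' | ∀ v : X, x' v ≤ clarkeDeriv φ x v}

/-- `λ_F(x)`, the minimal norm of elements of the Clarke subdifferential of `F` at `x`. -/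
def lambdaF (F : X → ℝ) (x : X) : ℝ :=
  sInf ((fun w : StrongDual ℝ X => ‖w‖) '' clarkeSubdiff F x)

/-- The Banach constant `C(T) = inf {‖T* y*‖ : ‖y*‖ = 1}`. -/
def banachC (T : X →L[ℝ] Y) : ℝ :=
  sInf ((fun y' : StrongDual ℝ Y => ‖y'.comp T‖) '' {y' | ‖y'‖ = 1})

/-- The dual Banach constant `C*(T) = inf {‖T u‖ : ‖u‖ = 1}`. -/
def banachCStar (T : X →L[ℝ] Y) : ℝ :=
  sInf ((fun u : X => ‖T u‖) '' {u : X | ‖u‖ = 1})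

/-- `sur Jf(x) = sup_{r>0} inf {C(T) : T ∈ co Jf(B(x;r))}`. -/
def surJ (Jf : X → Set (X →L[ℝ] Y)) (x : X) : ℝ :=
  sSup {c : ℝ | ∃ r > (0 : ℝ),
    c = sInf (banachC '' convexHull ℝ (⋃ z ∈ ball x r, Jf z))}

/-- `inj Jf(x) = sup_{r>0} inf {C*(T) : T ∈ co Jf(B(x;r))}`. -/
def injJ (Jf : X → Set (X →L[ℝ] Y)) (x : X) : ℝ :=
  sSup {c : ℝ | ∃ r > (0 : ℝ),
    c = sInf (banachCStar '' convexHull ℝ (⋃ z ∈ ball x r, Jf z))}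

/-- `Δ F_y(x) = ∂‖·‖(f(x)-y) ∘ co̅(Jf(x))`. -/
def DeltaF (f : X → Y) (Jf : X → Set (X →L[ℝ] Y)) (y : Y) (x : X) :
    Set (StrongDual ℝ X) :=
  {w | ∃ y' ∈ clarkeSubdiff (fun z : Y => ‖z‖) (f x - y),
      ∃ T ∈ closure (convexHull ℝ (Jf x)), w = ContinuousLinearMap.comp y' T}

/-- The chain rule condition for the pseudo-Jacobian mapping `Jf` of `f` on `U`. -/
def ChainRuleCond (f : X → Y) (Jf : X → Set (X →L[ℝ] Y)) (U : Set X) : Prop :=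
  ∀ x ∈ U, ∀ y : Y, y ≠ f x →
    IsClosed (StrongDual.toWeakDual '' DeltaF f Jf y x) ∧
    Convex ℝ (DeltaF f Jf y x) ∧
    IsPseudoJacobianAt (fun z : X => ‖f z - y‖) x (DeltaF f Jf y x)

/-- The strong chain rule condition: the chain rule condition, `f` locally Lipschitz,
and `Δ F_y(x)` contains the Clarke subdifferential of `F_y` at `x`. -/
def StrongChainRuleCond (f : X → Y) (Jf : X → Set (X →L[ℝ] Y)) (U : Set X) : Prop :=
  ChainRuleCond f Jf U ∧
  (∀ x ∈ U, ∃ K : NNReal, ∃ t ∈ 𝓝 x, LipschitzOnWith K f t) ∧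
  ∀ x ∈ U, ∀ y : Y, y ≠ f x →
    clarkeSubdiff (fun z : X => ‖f z - y‖) x ⊆ DeltaF f Jf y x

/-- `Jf` is regular at `x₀`. -/
def RegularAt (Jf : X → Set (X →L[ℝ] Y)) (x₀ : X) : Prop :=
  (∃ r > (0 : ℝ), ∀ T ∈ convexHull ℝ (⋃ z ∈ ball x₀ r, Jf z),
      ∃ e : X ≃L[ℝ] Y, (e : X →L[ℝ] Y) = T) ∧
  surJ Jf x₀ = injJ Jf x₀ ∧ 0 < surJ Jf x₀

/-- The regularity index `reg Jf(x₀)`. -/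
def regJ (Jf : X → Set (X →L[ℝ] Y)) (x₀ : X) : ℝ := surJ Jf x₀

/-- `f` is open with linear rate around `x₀`. -/
def OpenWithLinearRateAt (f : X → Y) (x₀ : X) : Prop :=
  ∃ V ∈ 𝓝 x₀, ∃ α > (0 : ℝ), ∀ x ∈ V, ∀ r > (0 : ℝ), ball x r ⊆ V →
    ball (f x) (α * r) ⊆ f '' ball x r

/-- `h` is a weight: continuous, nondecreasing, nonnegative on `[0,∞)`,
with `∫₀^∞ dρ/(1+h(ρ)) = ∞`. -/
def IsWeight (h : ℝ → ℝ) : Prop :=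
  ContinuousOn h (Ici 0) ∧ MonotoneOn h (Ici 0) ∧ (∀ ρ ∈ Ici (0 : ℝ), 0 ≤ h ρ) ∧
  ∫⁻ ρ in Ioi (0 : ℝ), ENNReal.ofReal (1 / (1 + h ρ)) = ⊤

/-- The weighted Chang–Palais–Smale condition for `F` with respect to the weight `h`. -/
def ChangPS (F : X → ℝ) (h : ℝ → ℝ) : Prop :=
  ∀ u : ℕ → X, (∃ M : ℝ, ∀ n, |F (u n)| ≤ M) →
    Tendsto (fun n => lambdaF F (u n) * (1 + h ‖u n‖)) atTop (𝓝 0) →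
    ∃ φ : ℕ → ℕ, StrictMono φ ∧ ∃ z : X, Tendsto ((fun n => u n) ∘ φ) atTop (𝓝 z)

/-- The local Lipschitz constant of `g` at `y`. -/
def lipConstAt (g : Y → X) (y : Y) : ℝ :=
  sInf {c : ℝ | ∃ r > (0 : ℝ), c = sSup {q : ℝ | ∃ u ∈ ball y r, ∃ w ∈ ball y r,
    u ≠ w ∧ q = ‖g u - g w‖ / ‖u - w‖}}


/-! ### Auxiliary material for the proof of the local openness theorem -/

section AuxHelpers

/-- Real-valued limsup bound: if `g ≤ a` eventually and `g` is eventually bounded below,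
then `limsup g l ≤ a`. -/
theorem real_limsup_le {α : Type*} (l : Filter α) [l.NeBot] (g : α → ℝ) (a c : ℝ)
    (h : ∀ᶠ x in l, g x ≤ a) (hc : ∀ᶠ x in l, c ≤ g x) : Filter.limsup g l ≤ a := by
  rw [Filter.limsup_eq]
  refine csInf_le ⟨c, ?_⟩ h
  rintro b hb
  rcases (hc.and hb).exists with ⟨x, h1, h2⟩
  linarith

/-- Real-valued limsup lower bound with the junk-value convention:
if `a ≤ 0` and `a ≤ g` eventually, then `a ≤ limsup g l`. -/
theorem real_le_limsup {α : Type*} (l : Filter α) [l.NeBot] (g : α → ℝ) (a : ℝ)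
    (ha : a ≤ 0) (h : ∀ᶠ x in l, a ≤ g x) : a ≤ Filter.limsup g l := by
  rw [Filter.limsup_eq]
  rcases Set.eq_empty_or_nonempty {b : ℝ | ∀ᶠ x in l, g x ≤ b} with he | hne
  · rw [he, Real.sInf_empty]; exact ha
  · refine le_csInf hne ?_
    rintro b hb
    rcases (h.and hb).exists with ⟨x, h1, h2⟩
    linarith

/-- Ekeland-type variational principle, tailored version. -/
theorem ekeland_aux {α : Type*} [MetricSpace α] [CompleteSpace α]
    (F : α → ℝ) (hF : Continuous F) (hF0 : ∀ u, 0 ≤ F u)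
    (x : α) (σ : ℝ) (hσ : 0 < σ) :
    ∃ z : α, F z ≤ F x ∧ σ * dist z x ≤ F x - F z ∧
      ∀ u : α, F z ≤ F u + σ * dist u z := by
  classical
  set S : α → Set α := fun a => {u | F u + σ * dist u a ≤ F a} with hS
  have hmem : ∀ a, a ∈ S a := by intro a; simp [hS]
  have hSbdd : ∀ a, BddBelow (F '' S a) := fun a => ⟨0, by rintro q ⟨u, _, rfl⟩; exact hF0 u⟩
  have hSclosed : ∀ a, IsClosed (S a) := by
    intro a
    have : S a = {u | F u + σ * dist u a - F a ≤ 0} := by ext u; simp [hS, sub_nonpos]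
    rw [this]
    apply isClosed_le _ continuous_const
    exact (hF.add (continuous_const.mul (continuous_id.dist continuous_const))).sub
      continuous_const
  set m : α → ℝ := fun a => sInf (F '' S a) with hm
  have hmle : ∀ a, m a ≤ F a := fun a => csInf_le (hSbdd a) ⟨a, hmem a, rfl⟩
  have hmge : ∀ a, ∀ u ∈ S a, m a ≤ F u := fun a u hu => csInf_le (hSbdd a) ⟨u, hu, rfl⟩
  have hstep : ∀ a : α, ∃ b, b ∈ S a ∧ F b ≤ (m a + F a) / 2 := by
    intro a
    rcases eq_or_lt_of_le (hmle a) with h | h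
    · exact ⟨a, hmem a, by rw [h]; linarith⟩
    · have : m a < (m a + F a) / 2 := by linarith
      rcases exists_lt_of_csInf_lt (by exact ⟨F a, a, hmem a, rfl⟩) this with ⟨q, ⟨u, hu, rfl⟩, hq⟩
      exact ⟨u, hu, hq.le⟩
  choose nxt hnxt₁ hnxt₂ using hstep
  set xs : ℕ → α := fun n => nxt^[n] x with hxs
  have hxsucc : ∀ n, xs (n + 1) = nxt (xs n) := fun n => Function.iterate_succ_apply' nxt n x
  have hnest : ∀ n, S (xs (n + 1)) ⊆ S (xs n) := by
    intro n u hu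
    have h1 : xs (n+1) ∈ S (xs n) := hxsucc n ▸ hnxt₁ (xs n)
    simp only [hS, mem_setOf_eq] at hu h1 ⊢
    have := dist_triangle u (xs (n+1)) (xs n)
    nlinarith [dist_nonneg (x := u) (y := xs (n+1)), dist_nonneg (x := xs (n+1)) (y := xs n)]
  have hnest' : ∀ m n, m ≤ n → S (xs n) ⊆ S (xs m) := by
    intro m n hmn
    induction n with
    | zero => simp_all
    | succ k ih =>
      rcases Nat.lt_or_ge m (k+1) with h | h
      · exact fun u hu => ih (Nat.lt_succ_iff.mp h) (hnest k hu)
      · have : m = k + 1 := le_antisymm hmn h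
        subst this; exact fun _ h => h
  have hxmem : ∀ m n, m ≤ n → xs n ∈ S (xs m) := by
    intro m n hmn
    exact hnest' m n hmn (hmem (xs n))
  have hgap : ∀ n, ∀ u ∈ S (xs (n + 1)), σ * dist u (xs (n + 1)) ≤ (F (xs n) - m (xs n)) / 2 := by
    intro n u hu
    have h2 : F (xs (n+1)) ≤ (m (xs n) + F (xs n)) / 2 := hxsucc n ▸ hnxt₂ (xs n)
    have h3 : m (xs n) ≤ F u := hmge (xs n) u (hnest n hu)
    simp only [hS, mem_setOf_eq] at hu
    linarith
  have hFxbound : ∀ n, F (xs n) - m (xs n) ≤ F x / 2 ^ n := by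
    intro n
    induction n with
    | zero =>
      have h0 : (0:ℝ) ≤ m (xs 0) := Real.sInf_nonneg (by rintro q ⟨u,_,rfl⟩; exact hF0 u)
      have : xs 0 = x := rfl
      rw [this] at h0 ⊢
      simpa using sub_le_self (F x) h0
    | succ k ih =>
      have h2 : F (xs (k+1)) ≤ (m (xs k) + F (xs k)) / 2 := hxsucc k ▸ hnxt₂ (xs k)
      have h3 : m (xs k) ≤ m (xs (k+1)) := by
        refine le_csInf ⟨F (xs (k+1)), ⟨xs (k+1), hmem _, rfl⟩⟩ ?_
        rintro q ⟨u, hu, rfl⟩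
        exact hmge (xs k) u (hnest k hu)
      have : F (xs (k+1)) - m (xs (k+1)) ≤ (F (xs k) - m (xs k)) / 2 := by linarith
      calc F (xs (k+1)) - m (xs (k+1)) ≤ (F (xs k) - m (xs k)) / 2 := this
        _ ≤ (F x / 2 ^ k) / 2 := by linarith
        _ = F x / 2 ^ (k+1) := by ring
  have hdist : ∀ n, dist (xs n) (xs (n+1)) ≤ (F x / σ) * (1/2) ^ n := by
    intro n
    have h1 : xs (n+1) ∈ S (xs n) := hxsucc n ▸ hnxt₁ (xs n)
    simp only [hS, mem_setOf_eq] at h1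
    have h3 : m (xs n) ≤ F (xs (n+1)) := hmge (xs n) _ (hxsucc n ▸ hnxt₁ (xs n))
    have h4 : σ * dist (xs (n+1)) (xs n) ≤ F x / 2 ^ n := by
      have := hFxbound n; linarith
    have h5 : dist (xs (n+1)) (xs n) ≤ (F x / 2 ^ n) / σ := (le_div_iff₀' hσ).2 h4
    calc dist (xs n) (xs (n+1)) = dist (xs (n+1)) (xs n) := dist_comm _ _
      _ ≤ (F x / 2 ^ n) / σ := h5
      _ = (F x / σ) * (1/2) ^ n := by rw [div_pow, one_pow]; ring
  have hcauchy : CauchySeq xs :=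
    cauchySeq_of_le_geometric (1/2) (F x / σ) (by norm_num) hdist
  rcases cauchySeq_tendsto_of_complete hcauchy with ⟨z, hz⟩
  have hzmem : ∀ n, z ∈ S (xs n) := by
    intro n
    apply (hSclosed (xs n)).mem_of_tendsto hz
    filter_upwards [eventually_ge_atTop n] with k hk using hxmem n k hk
  refine ⟨z, ?_, ?_, ?_⟩
  · have := hzmem 0; simp only [hS, mem_setOf_eq, hxs] at this
    simp only [Function.iterate_zero_apply] at this
    nlinarith [dist_nonneg (x := z) (y := x), hσ.le]
  · have := hzmem 0; simp only [hS, mem_setOf_eq, hxs] at this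
    simp only [Function.iterate_zero_apply] at this
    linarith
  · intro u
    by_contra hcon
    push_neg at hcon
    have humem : ∀ n, u ∈ S (xs n) := by
      intro n
      have hz' := hzmem n
      simp only [hS, mem_setOf_eq] at hz' ⊢
      have htri := dist_triangle u z (xs n)
      nlinarith
    have hud : ∀ n, σ * dist u (xs (n+1)) ≤ F x / 2 ^ n / 2 := by
      intro n
      calc σ * dist u (xs (n+1)) ≤ (F (xs n) - m (xs n)) / 2 := hgap n u (humem (n+1))
        _ ≤ F x / 2 ^ n / 2 := by have := hFxbound n; linarith
    have hgeo : Tendsto (fun n : ℕ => (1/2 : ℝ) ^ n) atTop (𝓝 0) :=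
      tendsto_pow_atTop_nhds_zero_of_lt_one (by norm_num) (by norm_num)
    have hgeo2 : Tendsto (fun n : ℕ => F x / σ / 2 * (1/2:ℝ)^n) atTop (𝓝 0) := by
      simpa using hgeo.const_mul (F x / σ / 2)
    have hdz : Tendsto (fun n => dist u (xs (n+1))) atTop (𝓝 0) := by
      apply squeeze_zero (fun n => dist_nonneg) (fun n => ?_) hgeo2
      have h4 : dist u (xs (n+1)) ≤ (F x / 2 ^ n / 2) / σ := (le_div_iff₀' hσ).2 (hud n)
      calc dist u (xs (n+1)) ≤ F x / 2 ^ n / 2 / σ := h4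
        _ = F x / σ / 2 * (1/2)^n := by rw [div_pow, one_pow]; ring
    have huz : Tendsto (fun n => xs (n+1)) atTop (𝓝 u) := by
      rw [tendsto_iff_dist_tendsto_zero]
      simpa [dist_comm] using hdz
    have hueq : u = z := tendsto_nhds_unique huz (hz.comp (tendsto_add_atTop_nat 1))
    subst hueq
    simp only [dist_self, mul_zero, add_zero] at hcon
    exact absurd hcon (lt_irrefl _)

/-- Evaluation at `v` as a linear functional on the weak-star dual. -/
def evalW (v : X) : WeakDual ℝ X →ₗ[ℝ] ℝ where
  toFun w := w v
  map_add' _ _ := rfl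
  map_smul' _ _ := rfl

instance weakDualLCS : LocallyConvexSpace ℝ (WeakDual ℝ X) :=
  WeakBilin.locallyConvexSpace (B := topDualPairing ℝ X)

/-- Every continuous linear functional on the weak-star dual is an evaluation. -/
theorem weakdual_repr (φ : WeakDual ℝ X →L[ℝ] ℝ) :
    ∃ v : X, ∀ w : WeakDual ℝ X, φ w = w v := by
  classical
  set B := topDualPairing ℝ X with hB
  have hws : WithSeminorms (LinearMap.toSeminormFamily B :
      X → Seminorm ℝ (WeakDual ℝ X)) := LinearMap.weakBilin_withSeminorms B
  let q : Seminorm ℝ (WeakDual ℝ X) := (normSeminorm ℝ ℝ).comp φ.toLinearMap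
  have hq : Continuous q := continuous_norm.comp φ.continuous
  obtain ⟨s, C, -, hle⟩ := Seminorm.bound_of_continuous hws q hq
  have hker : ∀ w : WeakDual ℝ X, (∀ v ∈ s, w v = 0) → φ w = 0 := by
    intro w hw
    have h1 : (s.sup (LinearMap.toSeminormFamily B)) w ≤ 0 := by
      apply Seminorm.finset_sup_apply_le le_rfl
      intro v hv
      change ‖B w v‖ ≤ 0
      simp [B, topDualPairing, hw v hv]
      exact hw v hv
    have h2 : q w ≤ C • (s.sup (LinearMap.toSeminormFamily B)) w := hle w
    have h1' : (s.sup (LinearMap.toSeminormFamily B)) w = 0 :=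
      le_antisymm h1 (apply_nonneg _ _)
    rw [h1'] at h2
    rw [smul_zero] at h2
    have h3 : ‖φ w‖ ≤ 0 := h2
    simpa using le_antisymm h3 (norm_nonneg _)
  have hkerle : ⨅ (i : ↥s), LinearMap.ker (evalW (i : X)) ≤ LinearMap.ker φ.toLinearMap := by
    intro w hw
    simp only [Submodule.mem_iInf, LinearMap.mem_ker] at hw ⊢
    exact hker w fun v hv => hw ⟨v, hv⟩
  have hspan := mem_span_of_iInf_ker_le_ker (𝕜 := ℝ) (L := fun i : ↥s => evalW (i : X)) hkerle
  obtain ⟨c, hc⟩ := (Finsupp.mem_span_range_iff_exists_finsupp).1 hspan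
  refine ⟨∑ i ∈ c.support, c i • ((i : X)), ?_⟩
  intro w
  have hsum := congrArg (fun (ψ : WeakDual ℝ X →ₗ[ℝ] ℝ) => ψ w) hc
  simp only [Finsupp.sum, LinearMap.coe_sum, Finset.sum_apply, LinearMap.smul_apply,
    smul_eq_mul] at hsum
  have h2 : w (∑ i ∈ c.support, c i • ((i : X))) = ∑ i ∈ c.support, c i * w i := by
    rw [map_sum]
    exact Finset.sum_congr rfl fun i _ => by rw [_root_.map_smul]; rfl
  rw [h2]
  exact hsum.symm

/-- If `Δ` is a nonempty convex weak-star closed set of functionals whose support function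
dominates `-σ‖·‖`, then `Δ` contains a functional of norm at most `σ`. -/
theorem exists_norm_le_of_support [CompleteSpace X] (Δ : Set (StrongDual ℝ X))
    (hne : Δ.Nonempty) (hconv : Convex ℝ Δ)
    (hclosed : IsClosed (StrongDual.toWeakDual '' Δ)) (σ : ℝ) (hσ : 0 < σ)
    (hsupp : ∀ v : X, -(σ * ‖v‖) ≤ sSup ((fun w : StrongDual ℝ X => w v) '' Δ)) :
    ∃ w ∈ Δ, ‖w‖ ≤ σ := by
  by_contra hcon
  push_neg at hcon
  set K : Set (WeakDual ℝ X) := StrongDual.toWeakDual '' (closedBall 0 σ) with hK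
  have hKeq : K = WeakDual.toStrongDual ⁻¹' (closedBall 0 σ) := by
    rw [hK]
    exact congrFun (Set.image_eq_preimage_of_inverse
      (StrongDual.toWeakDual (𝕜 := ℝ) (E := X)).symm_apply_apply
      (StrongDual.toWeakDual (𝕜 := ℝ) (E := X)).apply_symm_apply) (closedBall 0 σ)
  have hKcompact : IsCompact K := by
    rw [hKeq]; exact WeakDual.isCompact_closedBall (𝕜 := ℝ) (E := X) 0 σ
  have hlin : IsLinearMap ℝ (fun w : StrongDual ℝ X => StrongDual.toWeakDual w) :=
    ⟨fun a b => map_add _ a b, fun c a => map_smul _ c a⟩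
  have hKconv : Convex ℝ K :=
    (convex_closedBall (0 : StrongDual ℝ X) σ).is_linear_image hlin
  have hΔconv : Convex ℝ (StrongDual.toWeakDual '' Δ) := hconv.is_linear_image hlin
  have hdisj : Disjoint K (StrongDual.toWeakDual '' Δ) := by
    rw [Set.disjoint_left]
    rintro a ⟨w, hw, rfl⟩ ⟨w', hw', he⟩
    have : w' = w := StrongDual.toWeakDual.injective he
    subst this
    have : ‖w'‖ ≤ σ := by simpa [dist_eq_norm] using hw
    exact absurd this (not_le.2 (hcon w' hw'))
  obtain ⟨φ, u₁, u₂, hφK, h12, hφΔ⟩ :=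
    geometric_hahn_banach_compact_closed hKconv hKcompact hΔconv hclosed hdisj
  obtain ⟨v, hv⟩ := weakdual_repr φ
  have hu₂ : u₂ ≤ σ * ‖v‖ := by
    have hub : sSup ((fun w : StrongDual ℝ X => w (-v)) '' Δ) ≤ -u₂ := by
      refine csSup_le (hne.image _) ?_
      rintro q ⟨w, hw, rfl⟩
      have h1 : u₂ < φ (StrongDual.toWeakDual w) := hφΔ _ ⟨w, hw, rfl⟩
      rw [hv] at h1
      have h2 : (StrongDual.toWeakDual w) v = w v := rfl
      rw [h2] at h1
      show w (-v) ≤ -u₂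
      rw [map_neg]
      linarith
    have := (hsupp (-v)).trans hub
    rw [norm_neg] at this
    linarith
  rcases eq_or_ne v 0 with rfl | hv0
  · have h0K : (0 : WeakDual ℝ X) ∈ K := ⟨0, by simpa using hσ.le, map_zero _⟩
    have := hφK 0 h0K
    rw [map_zero] at this
    simp only [norm_zero, mul_zero] at hu₂
    linarith
  · obtain ⟨g, hg1, hgv⟩ := exists_dual_vector ℝ v (norm_ne_zero_iff.mpr hv0)
    have hmem : StrongDual.toWeakDual (σ • g) ∈ K := by
      refine ⟨σ • g, ?_, rfl⟩
      simp only [mem_closedBall, dist_zero_right, norm_smul, Real.norm_eq_abs,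
        abs_of_pos hσ, hg1, mul_one, le_refl]
    have h1 : φ (StrongDual.toWeakDual (σ • g)) < u₁ := hφK _ hmem
    rw [hv] at h1
    have h2 : (StrongDual.toWeakDual (σ • g)) v = σ * (g v) := rfl
    rw [h2] at h1
    have h3 : g v = ‖v‖ := by exact_mod_cast hgv
    rw [h3] at h1
    linarith

/-- An element of the Clarke subdifferential of the norm at a nonzero point has norm one. -/
theorem norm_clarkeSubdiff_norm_eq_one {u : Y} (hu : u ≠ 0)
    {y' : StrongDual ℝ Y} (hy' : y' ∈ clarkeSubdiff (fun z : Y => ‖z‖) u) :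
    ‖y'‖ = 1 := by
  have hle : ∀ v : Y, y' v ≤ ‖v‖ := by
    intro v
    refine (hy' v).trans ?_
    apply real_limsup_le _ _ _ (-‖v‖)
    · filter_upwards [Filter.prod_mem_prod (univ_mem : univ ∈ 𝓝 u)
        (self_mem_nhdsWithin : Ioi (0:ℝ) ∈ 𝓝[>] (0:ℝ))] with p hp
      have ht : (0:ℝ) < p.2 := hp.2
      rw [div_le_iff₀ ht]
      have := norm_add_le p.1 (p.2 • v)
      have h2 : ‖p.2 • v‖ = p.2 * ‖v‖ := by
        rw [norm_smul, Real.norm_eq_abs, abs_of_pos ht]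
      nlinarith
    · filter_upwards [Filter.prod_mem_prod (univ_mem : univ ∈ 𝓝 u)
        (self_mem_nhdsWithin : Ioi (0:ℝ) ∈ 𝓝[>] (0:ℝ))] with p hp
      have ht : (0:ℝ) < p.2 := hp.2
      rw [le_div_iff₀ ht]
      have habs := abs_norm_sub_norm_le (p.1 + p.2 • v) p.1
      have h2 : ‖p.1 + p.2 • v - p.1‖ = p.2 * ‖v‖ := by
        rw [add_sub_cancel_left, norm_smul, Real.norm_eq_abs, abs_of_pos ht]
      nlinarith [neg_abs_le (‖p.1 + p.2 • v‖ - ‖p.1‖)]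
  have hnorm_le : ‖y'‖ ≤ 1 := by
    refine ContinuousLinearMap.opNorm_le_bound _ zero_le_one fun v => ?_
    rw [one_mul, Real.norm_eq_abs, abs_le]
    constructor
    · have := hle (-v); rw [map_neg] at this
      have h2 := norm_neg v
      linarith
    · exact hle v
  have hlow : ‖u‖ ≤ y' u := by
    have h2 : y' (-u) ≤ -‖u‖ := by
      refine (hy' (-u)).trans ?_
      refine le_of_forall_pos_le_add fun ε hε => ?_
      apply real_limsup_le _ _ _ (-‖u‖ - 1)
      · filter_upwards [Filter.prod_mem_prod (Metric.ball_mem_nhds u (half_pos hε))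
          (Ioo_mem_nhdsGT_of_mem (Set.left_mem_Ico.2 one_pos))] with p hp
        obtain ⟨hp1, hp2⟩ := hp
        have ht0 : (0:ℝ) < p.2 := hp2.1
        have ht1 : p.2 < 1 := hp2.2
        have hpu : ‖p.1 - u‖ < ε/2 := by
          rw [← dist_eq_norm]; exact hp1
        have key : ‖p.1 + p.2 • (-u)‖ ≤ (1 - p.2) * ‖p.1‖ + p.2 * ‖p.1 - u‖ := by
          have hid : p.1 + p.2 • (-u) = (1 - p.2) • p.1 + p.2 • (p.1 - u) := by
            simp only [smul_neg, smul_sub, sub_smul, one_smul]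
            abel
          rw [hid]
          refine (norm_add_le _ _).trans ?_
          rw [norm_smul, norm_smul, Real.norm_eq_abs, Real.norm_eq_abs,
            abs_of_pos ht0, abs_of_pos (by linarith : (0:ℝ) < 1 - p.2)]
        rw [div_le_iff₀ ht0]
        have hnu : ‖u‖ - ‖p.1 - u‖ ≤ ‖p.1‖ := by
          have := norm_sub_norm_le u (u - p.1)
          have h3 : ‖u - (u - p.1)‖ = ‖p.1‖ := by rw [sub_sub_cancel]
          have h4 : ‖u - p.1‖ = ‖p.1 - u‖ := norm_sub_rev u p.1
          linarith
        nlinarith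
      · filter_upwards [Filter.prod_mem_prod (univ_mem : univ ∈ 𝓝 u)
          (self_mem_nhdsWithin : Ioi (0:ℝ) ∈ 𝓝[>] (0:ℝ))] with p hp
        have ht : (0:ℝ) < p.2 := hp.2
        rw [le_div_iff₀ ht]
        have habs := abs_norm_sub_norm_le (p.1 + p.2 • (-u)) p.1
        have h2 : ‖p.1 + p.2 • (-u) - p.1‖ = p.2 * ‖u‖ := by
          rw [add_sub_cancel_left, norm_smul, norm_neg, Real.norm_eq_abs, abs_of_pos ht]
        nlinarith [neg_abs_le (‖p.1 + p.2 • (-u)‖ - ‖p.1‖)]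
    have := map_neg y' u
    linarith [h2, (by rw [map_neg] : y' (-u) = - y' u)]
  refine le_antisymm hnorm_le ?_
  have hu0 : 0 < ‖u‖ := norm_pos_iff.2 hu
  have := y'.le_opNorm u
  have habs : y' u ≤ ‖y' u‖ := le_abs_self _
  nlinarith [hlow]

end AuxHelpers

/-- **Local openness theorem.** If `f : U → Y` is continuous with a pseudo-Jacobian mapping
`Jf` satisfying the chain rule condition on `U` and `sur Jf(x₀) > 0`, then `f` is open with
linear rate around `x₀`: for each `0 < α < sur Jf(x₀)` there is a neighborhood `V` of `x₀`
such that `B(f(x); αr) ⊆ f(B(x;r))` whenever `x ∈ V`, `r > 0` and `B(x;r) ⊆ V`. -/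
theorem local_openness {X Y : Type*} [NormedAddCommGroup X] [NormedSpace ℝ X] [CompleteSpace X]
    [NormedAddCommGroup Y] [NormedSpace ℝ Y] [CompleteSpace Y]
    (U : Set X) (hU : IsOpen U) (f : X → Y) (hf : ContinuousOn f U)
    (Jf : X → Set (X →L[ℝ] Y)) (hJf : ∀ x ∈ U, IsPseudoJacobianAt f x (Jf x))
    (hcr : ChainRuleCond f Jf U) (x₀ : X) (hx₀ : x₀ ∈ U) (hsur : 0 < surJ Jf x₀) :
    OpenWithLinearRateAt f x₀ ∧
    ∀ α : ℝ, 0 < α → α < surJ Jf x₀ → ∃ V ∈ 𝓝 x₀, V ⊆ U ∧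
      ∀ x ∈ V, ∀ r > (0 : ℝ), ball x r ⊆ V → ball (f x) (α * r) ⊆ f '' ball x r := by
    classical
  have hSne : {c : ℝ | ∃ r > (0 : ℝ),
      c = sInf (banachC '' convexHull ℝ (⋃ z ∈ ball x₀ r, Jf z))}.Nonempty :=
    ⟨_, 1, one_pos, rfl⟩
  have key : ∀ α : ℝ, 0 < α → α < surJ Jf x₀ → ∃ V ∈ 𝓝 x₀, V ⊆ U ∧
      ∀ x ∈ V, ∀ r > (0 : ℝ), ball x r ⊆ V → ball (f x) (α * r) ⊆ f '' ball x r := by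
    intro α hα hαs
    obtain ⟨c, ⟨r₁, hr₁, hc⟩, hαc⟩ := exists_lt_of_lt_csSup hSne hαs
    obtain ⟨r₃, hr₃, hballU⟩ := Metric.isOpen_iff.1 hU x₀ hx₀
    have hr₂ : 0 < min r₁ r₃ := lt_min hr₁ hr₃
    refine ⟨ball x₀ (min r₁ r₃), ball_mem_nhds x₀ hr₂,
      (ball_subset_ball (min_le_right _ _)).trans hballU, ?_⟩
    intro x hx r' hr' hsubV
    -- the constant of the Ekeland perturbation
    set σ := (α + c) / 2 with hσdef
    have hσα : α < σ := by simp only [hσdef]; linarith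
    have hσc : σ < c := by simp only [hσdef]; linarith
    have hσ0 : 0 < σ := lt_trans hα hσα
    intro y hy
    rcases eq_or_ne y (f x) with rfl | hyfx
    · exact ⟨x, mem_ball_self hr', rfl⟩
    have hε0 : 0 < ‖f x - y‖ := by
      rw [norm_pos_iff, sub_ne_zero]; exact (Ne.symm hyfx)
    set ε := ‖f x - y‖ with hεdef
    have hεαr : ε < α * r' := by
      rw [mem_ball, dist_eq_norm] at hy
      calc ε = ‖y - f x‖ := (norm_sub_rev _ _)
        _ < α * r' := hy
    have hεσr : ε / σ < r' := by
      rw [div_lt_iff₀ hσ0]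
      nlinarith
    set ρ' := (ε / σ + r') / 2 with hρ'def
    have hρ'1 : ε / σ < ρ' := by simp only [hρ'def]; linarith
    have hρ'2 : ρ' < r' := by simp only [hρ'def]; linarith
    have hρ'0 : 0 < ρ' := by
      have : 0 < ε / σ := div_pos hε0 hσ0
      linarith
    have hsub1 : closedBall x ρ' ⊆ ball x r' := closedBall_subset_ball hρ'2
    have hsubU : closedBall x ρ' ⊆ U :=
      hsub1.trans (hsubV.trans ((ball_subset_ball (min_le_right _ _)).trans hballU))
    have hsubr₁ : closedBall x ρ' ⊆ ball x₀ r₁ :=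
      hsub1.trans (hsubV.trans (ball_subset_ball (min_le_left _ _)))
    -- Ekeland on the closed ball
    haveI : CompleteSpace ↥(closedBall x ρ') :=
      (Metric.isClosed_closedBall (x := x) (ε := ρ')).completeSpace_coe
    set F : ↥(closedBall x ρ') → ℝ := fun u => ‖f u - y‖ with hFdef
    have hFc : Continuous F := by
      have h1 : ContinuousOn (fun z : X => ‖f z - y‖) (closedBall x ρ') :=
        ((hf.mono hsubU).sub continuousOn_const).norm
      exact h1.restrict
    have hxS : x ∈ closedBall x ρ' := mem_closedBall_self hρ'0.le
    obtain ⟨zz, hz1, hz2, hz3⟩ := ekeland_aux F hFc (fun u => norm_nonneg _) ⟨x, hxS⟩ σ hσ0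
    have hFx : F ⟨x, hxS⟩ = ε := rfl
    have hzx : dist (zz : X) x ≤ ε / σ := by
      have h1 : dist zz (⟨x, hxS⟩ : ↥(closedBall x ρ')) = dist (zz : X) x :=
        Subtype.dist_eq zz ⟨x, hxS⟩
      have h0 : (0:ℝ) ≤ F zz := by simp only [hFdef]; exact norm_nonneg _
      have h2 : σ * dist (zz : X) x ≤ ε := by
        rw [← h1]
        rw [hFx] at hz2
        linarith
      exact (le_div_iff₀' hσ0).2 h2
    have hzball : (zz : X) ∈ ball x r' := by
      rw [mem_ball]
      exact lt_of_le_of_lt hzx (lt_trans hρ'1 hρ'2)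
    have hzU : (zz : X) ∈ U := hsubU (mem_closedBall.2 (hzx.trans hρ'1.le))
    have hzr₁ : (zz : X) ∈ ball x₀ r₁ := hsubr₁ (mem_closedBall.2 (hzx.trans hρ'1.le))
    -- the Ekeland point is a solution
    have hfz : f (zz : X) = y := by
      by_contra hne
      have hyne : y ≠ f (zz : X) := Ne.symm hne
      obtain ⟨hclosed, hconv, hpjne, hpj⟩ := hcr (zz : X) hzU y hyne
      -- support function estimate
      have hsupp : ∀ v : X, -(σ * ‖v‖) ≤
          sSup ((fun w : StrongDual ℝ X => w v) '' DeltaF f Jf y (zz : X)) := by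
        intro v
        have hdini : -(σ * ‖v‖) ≤ diniPlus (fun z' => ‖f z' - y‖) (zz : X) v := by
          apply real_le_limsup _ _ _ (neg_nonpos.2 (by positivity))
          have hδpos : 0 < (ρ' - dist (zz : X) x) / (‖v‖ + 1) := by
            apply div_pos _ (by positivity)
            have := hzx
            linarith
          filter_upwards [Ioo_mem_nhdsGT_of_mem (Set.left_mem_Ico.2 hδpos)] with t ht
          obtain ⟨ht0, htδ⟩ := ht
          have hmem : (zz : X) + t • v ∈ closedBall x ρ' := by
            rw [mem_closedBall, dist_eq_norm]
            have h1 : (zz : X) + t • v - x = ((zz : X) - x) + t • v := by abel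
            rw [h1]
            refine (norm_add_le _ _).trans ?_
            have h2 : ‖t • v‖ = t * ‖v‖ := by
              rw [norm_smul, Real.norm_eq_abs, abs_of_pos ht0]
            have h3 : ‖(zz : X) - x‖ = dist (zz : X) x := (dist_eq_norm _ _).symm
            rw [h2, h3]
            have h4 : t * ‖v‖ ≤ t * (‖v‖ + 1) := by nlinarith
            have h5 : t * (‖v‖ + 1) < ρ' - dist (zz : X) x := by
              rw [← lt_div_iff₀ (by positivity : (0:ℝ) < ‖v‖ + 1)]
              exact htδ
            linarith
          have hek := hz3 ⟨(zz : X) + t • v, hmem⟩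
          have hdist : dist (⟨(zz : X) + t • v, hmem⟩ : ↥(closedBall x ρ')) zz = t * ‖v‖ := by
            rw [Subtype.dist_eq, dist_eq_norm]
            have h1 : (zz : X) + t • v - (zz : X) = t • v := by abel
            rw [h1, norm_smul, Real.norm_eq_abs, abs_of_pos ht0]
          rw [hdist] at hek
          have hFz : F zz = ‖f (zz : X) - y‖ := rfl
          have hFu : F ⟨(zz : X) + t • v, hmem⟩ = ‖f ((zz : X) + t • v) - y‖ := rfl
          rw [hFz, hFu] at hek
          rw [le_div_iff₀ ht0]
          nlinarith
        refine le_trans hdini ?_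
        have hid := hpj (ContinuousLinearMap.id ℝ ℝ) v
        simpa only [ContinuousLinearMap.id_apply] using hid
      obtain ⟨w, hwΔ, hwσ⟩ := exists_norm_le_of_support (DeltaF f Jf y (zz : X))
        hpjne hconv hclosed σ hσ0 hsupp
      obtain ⟨y', hy', T, hT, rfl⟩ := hwΔ
      have hy'1 : ‖y'‖ = 1 :=
        norm_clarkeSubdiff_norm_eq_one (sub_ne_zero.2 hne) hy'
      obtain ⟨S', hS', hdistTS⟩ := Metric.mem_closure_iff.1 hT ((c - σ)/2) (by linarith)
      have hS'' : S' ∈ convexHull ℝ (⋃ z' ∈ ball x₀ r₁, Jf z') :=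
        convexHull_mono (Set.subset_biUnion_of_mem hzr₁) hS'
      have hbc_nonneg : ∀ T' : X →L[ℝ] Y, 0 ≤ banachC T' := fun T' =>
        Real.sInf_nonneg (by rintro q ⟨g, _, rfl⟩; exact norm_nonneg _)
      have h1 : c ≤ banachC S' := by
        rw [hc]
        refine csInf_le ⟨0, ?_⟩ ⟨S', hS'', rfl⟩
        rintro q ⟨T', _, rfl⟩
        exact hbc_nonneg T'
      have h2 : banachC S' ≤ ‖y'.comp S'‖ := by
        refine csInf_le ⟨0, ?_⟩ ⟨y', hy'1, rfl⟩
        rintro q ⟨g, _, rfl⟩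
        exact norm_nonneg _
      have h3 : ‖y'.comp S'‖ ≤ ‖y'.comp T‖ + ‖S' - T‖ := by
        have hdecomp : y'.comp S' = y'.comp T + y'.comp (S' - T) := by
          rw [← ContinuousLinearMap.comp_add]
          congr 1
          abel
        rw [hdecomp]
        refine (norm_add_le _ _).trans ?_
        have h4 : ‖y'.comp (S' - T)‖ ≤ ‖y'‖ * ‖S' - T‖ := ContinuousLinearMap.opNorm_comp_le _ _
        rw [hy'1, one_mul] at h4
        linarith
      have h5 : ‖S' - T‖ < (c - σ) / 2 := by
        rw [← dist_eq_norm, dist_comm]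
        exact hdistTS
      linarith
    exact ⟨(zz : X), hzball, hfz⟩
  refine ⟨?_, key⟩
  obtain ⟨V, hV, hVU, h⟩ := key (surJ Jf x₀ / 2) (half_pos hsur) (half_lt_self hsur)
  exact ⟨V, hV, surJ Jf x₀ / 2, half_pos hsur, h⟩
end
end

section
/- Let X and Y be real Banach spaces, U an open subset of X, and f : U → Y a continuous map with a pseudo-Jacobian mapping Jf satisfying the chain rule condition on U. If inj Jf(x₀) > 0 for some x₀ ∈ U, then f is locally one-to-one at x₀; more precisely, for each 0 < α < inj Jf(x₀) there exists a neighborhood V of x₀ such that for every u, w ∈ V one has ‖f(u) − f(w)‖ ≥ α‖u − w‖. -/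
open Filter Topology Metric Set MeasureTheory

noncomputable section

variable {X Y : Type*} [NormedAddCommGroup X] [NormedSpace ℝ X]
  [NormedAddCommGroup Y] [NormedSpace ℝ Y]

private lemma mvt_aux (g : ℝ → ℝ) (hg : ContinuousOn g (Icc 0 1)) (M : ℝ)
    (h : ∀ t ∈ Ico (0:ℝ) 1, ∀ r, M < r → ∃ᶠ z in 𝓝[>] t, slope g t z < r) :
    g 1 - g 0 ≤ M := by
  have key : ∀ r, M < r → g 1 ≤ g 0 + r * 1 := by
    intro r hr
    have hB : ∀ x ∈ Ico (0:ℝ) 1, HasDerivWithinAt (fun t => g 0 + r * t) r (Ici x) x := by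
      intro x _
      have : HasDerivAt (fun t => g 0 + r * t) r x := by
        simpa using ((hasDerivAt_id x).const_mul r).const_add (g 0)
      exact this.hasDerivWithinAt
    have := image_le_of_liminf_slope_right_lt_deriv_boundary' (f := g) (f' := fun _ => M)
      (a := 0) (b := 1) hg h (B := fun t => g 0 + r * t) (B' := fun _ => r)
      (by simp) ((continuous_const.add (continuous_const.mul continuous_id)).continuousOn)
      hB (fun x _ _ => hr)
    exact this (right_mem_Icc.2 zero_le_one)
  by_contra hlt
  push_neg at hlt
  obtain ⟨r, h1, h2⟩ := exists_between (show M < g 1 - g 0 from hlt)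
  have := key r h1
  linarith

private lemma frequently_slope_of_diniPlus {X : Type*} [NormedAddCommGroup X] [NormedSpace ℝ X]
    {φ : X → ℝ} {x v : X} {M r : ℝ}
    (hd : diniPlus φ x v ≤ M) (hM : M < 0) (hr : M < r) :
    ∃ᶠ τ in 𝓝[>] (0:ℝ), (φ (x + τ • v) - φ x) / τ < r := by
  set A := {a : ℝ | ∀ᶠ τ in 𝓝[>] (0:ℝ), (φ (x + τ • v) - φ x) / τ ≤ a} with hAdef
  have hA : sInf A ≤ M := by
    simp only [diniPlus, Filter.limsup_eq] at hd
    exact hd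
  have hne : A.Nonempty := by
    by_contra h
    rw [Set.not_nonempty_iff_eq_empty] at h
    rw [h, Real.sInf_empty] at hA; linarith
  obtain ⟨a, haA, har⟩ := exists_lt_of_csInf_lt hne (lt_of_le_of_lt hA hr)
  simp only [hAdef, Set.mem_setOf_eq] at haA
  exact (haA.mono fun τ hτ => lt_of_le_of_lt hτ har).frequently

/-- **Local injectivity theorem.** If `f : U → Y` is continuous with a pseudo-Jacobian mapping
`Jf` satisfying the chain rule condition on `U` and `inj Jf(x₀) > 0`, then `f` is locally
one-to-one at `x₀`: for each `0 < α < inj Jf(x₀)` there is a neighborhood `V` of `x₀` such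
that `‖f(u) − f(w)‖ ≥ α‖u − w‖` for all `u, w ∈ V`. -/
theorem local_injectivity {X Y : Type*} [NormedAddCommGroup X] [NormedSpace ℝ X] [CompleteSpace X]
    [NormedAddCommGroup Y] [NormedSpace ℝ Y] [CompleteSpace Y]
    (U : Set X) (hU : IsOpen U) (f : X → Y) (hf : ContinuousOn f U)
    (Jf : X → Set (X →L[ℝ] Y)) (hJf : ∀ x ∈ U, IsPseudoJacobianAt f x (Jf x))
    (hcr : ChainRuleCond f Jf U) (x₀ : X) (hx₀ : x₀ ∈ U) (hinj : 0 < injJ Jf x₀) :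
    (∃ V ∈ 𝓝 x₀, Set.InjOn f V) ∧
    ∀ α : ℝ, 0 < α → α < injJ Jf x₀ → ∃ V ∈ 𝓝 x₀, V ⊆ U ∧
      ∀ u ∈ V, ∀ w ∈ V, α * ‖u - w‖ ≤ ‖f u - f w‖ := by
  have key : ∀ α : ℝ, 0 < α → α < injJ Jf x₀ → ∃ V ∈ 𝓝 x₀, V ⊆ U ∧
      ∀ u ∈ V, ∀ w ∈ V, α * ‖u - w‖ ≤ ‖f u - f w‖ := by
    intro α hα hαinj
    have hS : ∃ c ∈ {c : ℝ | ∃ r > (0:ℝ),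
        c = sInf (banachCStar '' convexHull ℝ (⋃ z ∈ ball x₀ r, Jf z))}, α < c := by
      by_contra h
      push_neg at h
      have : injJ Jf x₀ ≤ α := Real.sSup_le (fun x hx => h x hx) hα.le
      linarith
    obtain ⟨c, ⟨r, hr, hc⟩, hαc⟩ := hS
    have hcpos : 0 < c := hα.trans hαc
    obtain ⟨r'', hr'', hball⟩ := Metric.isOpen_iff.1 hU x₀ hx₀
    set ρ := min r r'' with hρ
    have hρpos : 0 < ρ := lt_min hr hr''
    have hVU : ball x₀ ρ ⊆ U := (ball_subset_ball (min_le_right _ _)).trans hball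
    refine ⟨ball x₀ ρ, ball_mem_nhds _ hρpos, hVU, ?_⟩
    intro u hu w hw
    by_contra hcon
    push_neg at hcon
    have hneuw : u ≠ w := by rintro rfl; simp at hcon
    set v := u - w with hvdef
    have hv : 0 < ‖v‖ := norm_pos_iff.2 (sub_ne_zero.2 hneuw)
    -- lower bound for banachCStar on the hull
    have hC0 : ∀ T : X →L[ℝ] Y, 0 ≤ banachCStar T := by
      intro T
      apply Real.sInf_nonneg
      rintro q ⟨u', -, rfl⟩; exact norm_nonneg _
    set H := convexHull ℝ (⋃ z ∈ ball x₀ ρ, Jf z) with hH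
    have hcle : ∀ T ∈ H, c ≤ banachCStar T := by
      intro T hT
      have hT' : T ∈ convexHull ℝ (⋃ z ∈ ball x₀ r, Jf z) :=
        convexHull_mono (Set.biUnion_subset_biUnion_left (ball_subset_ball (min_le_left _ _))) hT
      rw [hc]
      exact csInf_le ⟨0, by rintro q ⟨S, -, rfl⟩; exact hC0 S⟩ ⟨T, hT', rfl⟩
    have hTv : ∀ T ∈ H, c * ‖v‖ ≤ ‖T v‖ := by
      intro T hT
      have hmem : (‖v‖⁻¹ • v) ∈ {u : X | ‖u‖ = 1} := by
        simp [norm_smul, abs_of_nonneg, inv_mul_cancel₀ (ne_of_gt hv)]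
      have h1 : banachCStar T ≤ ‖T (‖v‖⁻¹ • v)‖ :=
        csInf_le ⟨0, by rintro q ⟨u', -, rfl⟩; exact norm_nonneg _⟩
          (Set.mem_image_of_mem (fun u => ‖T u‖) hmem)
      have h2 : ‖T (‖v‖⁻¹ • v)‖ = ‖T v‖ / ‖v‖ := by
        rw [T.map_smul, norm_smul, norm_inv, norm_norm, div_eq_inv_mul]
      have h3 : c ≤ ‖T v‖ / ‖v‖ := (hcle T hT).trans (h1.trans_eq h2)
      calc c * ‖v‖ ≤ ‖T v‖ / ‖v‖ * ‖v‖ := mul_le_mul_of_nonneg_right h3 hv.le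
        _ = ‖T v‖ := div_mul_cancel₀ _ (ne_of_gt hv)
    set Cs := closure ((fun T : X →L[ℝ] Y => T v) '' H) with hCs
    have hlin : IsLinearMap ℝ (fun T : X →L[ℝ] Y => T v) :=
      ⟨fun a b => rfl, fun a b => rfl⟩
    have hCconv : Convex ℝ Cs := ((convex_convexHull ℝ _).is_linear_image hlin).closure
    have hCnorm : ∀ y ∈ Cs, c * ‖v‖ ≤ ‖y‖ := by
      intro y hy
      have hsub : (fun T : X →L[ℝ] Y => T v) '' H ⊆ {y : Y | c * ‖v‖ ≤ ‖y‖} := by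
        rintro _ ⟨T, hT, rfl⟩; exact hTv T hT
      have : y ∈ closure {y : Y | c * ‖v‖ ≤ ‖y‖} := closure_mono hsub hy
      rwa [IsClosed.closure_eq (isClosed_le continuous_const continuous_norm)] at this
    have hdisj : Disjoint (ball (0:Y) (c * ‖v‖)) Cs := by
      rw [Set.disjoint_left]
      intro y hyb hyC
      have h1 := hCnorm y hyC
      rw [mem_ball, dist_zero_right] at hyb
      linarith
    obtain ⟨φ, σ, hφ1, hφ2⟩ :=
      geometric_hahn_banach_open (convex_ball 0 (c * ‖v‖)) isOpen_ball hCconv hdisj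
    have hσpos : 0 < σ := by
      have := hφ1 0 (mem_ball_self (mul_pos hcpos hv))
      simpa using this
    -- the segment
    have hseg : ∀ t ∈ Icc (0:ℝ) 1, w + t • v ∈ ball x₀ ρ := by
      intro t ht
      have heq : w + t • v = (1 - t) • w + t • u := by
        rw [hvdef, smul_sub, sub_smul, one_smul]; abel
      rw [heq]
      exact (convex_ball x₀ ρ) hw hu (by linarith [ht.2]) ht.1 (by ring)
    set g : ℝ → ℝ := fun t => -φ (f (w + t • v)) with hgdef
    have hpath : ContinuousOn (fun t : ℝ => f (w + t • v)) (Icc 0 1) :=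
      hf.comp ((continuous_const.add (continuous_id.smul continuous_const)).continuousOn)
        (fun t ht => hVU (hseg t ht))
    have hgc : ContinuousOn g (Icc 0 1) := (φ.continuous.neg.comp_continuousOn hpath)
    have hmvt : ∀ t ∈ Ico (0:ℝ) 1, ∀ r', -σ < r' → ∃ᶠ z in 𝓝[>] t, slope g t z < r' := by
      intro t ht r' hr'
      set z₀ := w + t • v with hz₀
      have hz₀b : z₀ ∈ ball x₀ ρ := hseg t ⟨ht.1, ht.2.le⟩
      have hJ := hJf z₀ (hVU hz₀b)
      have hsup : sSup ((fun T : X →L[ℝ] Y => (-φ) (T v)) '' Jf z₀) ≤ -σ := by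
        apply csSup_le (hJ.1.image _)
        rintro q ⟨T, hT, rfl⟩
        have hTC : T v ∈ Cs :=
          subset_closure ⟨T, subset_convexHull ℝ _ (Set.mem_biUnion hz₀b hT), rfl⟩
        have := hφ2 _ hTC
        simp only [ContinuousLinearMap.neg_apply]
        linarith
      have hd : diniPlus (fun x => (-φ) (f x)) z₀ v ≤ -σ := (hJ.2 (-φ) v).trans hsup
      have hfreq := frequently_slope_of_diniPlus hd (by linarith) hr'
      have hmapf : Filter.map (fun τ : ℝ => t + τ) (𝓝[>] (0:ℝ)) = 𝓝[>] t := by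
        have h := (Homeomorph.addLeft t).isEmbedding.map_nhdsWithin_eq (Ioi (0:ℝ)) 0
        simpa [image_const_add_Ioi] using h
      rw [← hmapf, Filter.frequently_map]
      refine hfreq.mono fun τ hτ => ?_
      have hzz : w + (t + τ) • v = z₀ + τ • v := by
        rw [hz₀, add_smul]; abel
      have hslope : slope g t (t + τ) =
          ((fun x => (-φ) (f x)) (z₀ + τ • v) - (fun x => (-φ) (f x)) z₀) / τ := by
        rw [slope_def_field]
        simp only [hgdef, hzz, ContinuousLinearMap.neg_apply, add_sub_cancel_left, hz₀]
      rw [hslope]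
      exact hτ
    have hMVT : g 1 - g 0 ≤ -σ := mvt_aux g hgc (-σ) hmvt
    have hp : f u - f w ∈ ball (0:Y) (c * ‖v‖) := by
      rw [mem_ball, dist_zero_right]
      calc ‖f u - f w‖ < α * ‖v‖ := hcon
        _ < c * ‖v‖ := by exact mul_lt_mul_of_pos_right hαc hv
    have h1 := hφ1 _ hp
    have hg1 : g 1 = -φ (f u) := by
      simp only [hgdef, one_smul, hvdef]
      norm_num
    have hg0 : g 0 = -φ (f w) := by
      simp only [hgdef, zero_smul, add_zero]
    have hsub : g 1 - g 0 = -(φ (f u - f w)) := by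
      rw [hg1, hg0, map_sub]; ring
    linarith [hsub ▸ hMVT]
  refine ⟨?_, key⟩
  obtain ⟨V, hV, -, hest⟩ := key (injJ Jf x₀ / 2) (half_pos hinj) (half_lt_self hinj)
  refine ⟨V, hV, fun u hu w hw huw => ?_⟩
  by_contra hne
  have h0 : ‖f u - f w‖ = 0 := by rw [huw, sub_self, norm_zero]
  have hpos : 0 < injJ Jf x₀ / 2 * ‖u - w‖ :=
    mul_pos (half_pos hinj) (norm_pos_iff.2 (sub_ne_zero.2 hne))
  linarith [hest u hu w hw]
end
end

section
/- Let X and Y be real Banach spaces and f : X → Y a locally Lipschitz map with a pseudo-Jacobian mapping Jf satisfying the chain rule condition on X. Suppose that ∫₀^∞ inf_{‖x‖≤ρ} sur Jf(x) dρ = ∞. Then f is a surjective map onto Y, open with linear rate at every x ∈ X, and for every r > 0 one has B(f(0); ϱ(r)) ⊆ f(B(0;r)), where ϱ(r) = ∫₀^r inf_{‖x‖≤ρ} sur Jf(x) dρ. -/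
open Filter Topology Metric Set MeasureTheory

noncomputable section

variable {X Y : Type*} [NormedAddCommGroup X] [NormedSpace ℝ X]
  [NormedAddCommGroup Y] [NormedSpace ℝ Y]

section Helpers

theorem my_ekeland {α : Type*} [MetricSpace α] [CompleteSpace α] {F : α → ℝ}
    (hc : Continuous F) (h0 : ∀ x, 0 ≤ F x) (x₀ : α) {ε : ℝ} (hε : 0 < ε) :
    ∃ z : α, F z + ε * dist z x₀ ≤ F x₀ ∧ ∀ u, F z ≤ F u + ε * dist u z := by
  have hstep : ∀ x : α, ∀ n : ℕ, ∃ u : α, (F u + ε * dist u x ≤ F x) ∧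
      ∀ w, F w + ε * dist w x ≤ F x → F u ≤ F w + (1/2 : ℝ)^n := by
    intro x n
    set S := {w | F w + ε * dist w x ≤ F x} with hS
    have hSne : S.Nonempty := ⟨x, by simp [hS]⟩
    have hbdd : BddBelow (F '' S) := ⟨0, by rintro _ ⟨w, _, rfl⟩; exact h0 w⟩
    have hpos : (0:ℝ) < (1/2:ℝ)^n := by positivity
    obtain ⟨fw, ⟨w, hw, rfl⟩, hfw⟩ := exists_lt_of_csInf_lt (hSne.image F)
      (lt_add_of_pos_right (sInf (F '' S)) hpos)
    refine ⟨w, hw, fun u hu => ?_⟩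
    have : sInf (F '' S) ≤ F u := csInf_le hbdd ⟨u, hu, rfl⟩
    linarith
  choose nxt hnxt1 hnxt2 using hstep
  let seq : ℕ → α := fun n => Nat.rec x₀ (fun n x => nxt x n) n
  have hseq0 : seq 0 = x₀ := rfl
  have hseqS : ∀ n, seq (n+1) = nxt (seq n) n := fun n => rfl
  have h1 : ∀ n, F (seq (n+1)) + ε * dist (seq (n+1)) (seq n) ≤ F (seq n) := by
    intro n; rw [hseqS]; exact hnxt1 (seq n) n
  have hmono : ∀ n, F (seq (n+1)) ≤ F (seq n) := by
    intro n; have := h1 n; nlinarith [dist_nonneg (x := seq (n+1)) (y := seq n)]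
  have hchain : ∀ n m, n ≤ m → ε * dist (seq m) (seq n) ≤ F (seq n) - F (seq m) := by
    intro n m hnm
    induction m, hnm using Nat.le_induction with
    | base => simp
    | succ m hnm ih =>
      have h2 := h1 m
      have : dist (seq (m+1)) (seq n) ≤ dist (seq (m+1)) (seq m) + dist (seq m) (seq n) :=
        dist_triangle _ _ _
      nlinarith
  have hbddb : BddBelow (range (F ∘ seq)) := ⟨0, by rintro _ ⟨n, rfl⟩; exact h0 _⟩
  have hanti : Antitone (F ∘ seq) := antitone_nat_of_succ_le hmono
  have hFlim : Tendsto (F ∘ seq) atTop (𝓝 (⨅ n, F (seq n))) := tendsto_atTop_ciInf hanti hbddb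
  set L := ⨅ n, F (seq n) with hL
  have hLle : ∀ n, L ≤ F (seq n) := fun n => ciInf_le hbddb n
  have hCauchy : CauchySeq seq := by
    apply cauchySeq_of_le_tendsto_0 (fun N => 2/ε * (F (seq N) - L))
    · intro n m N hn hm
      have t1 := hchain N n hn
      have t2 := hchain N m hm
      have := dist_triangle (seq n) (seq N) (seq m)
      have hd : dist (seq N) (seq m) = dist (seq m) (seq N) := dist_comm _ _
      have hLn := hLle n; have hLm := hLle m
      rw [div_mul_eq_mul_div, le_div_iff₀ hε]
      nlinarith
    · have : Tendsto (fun N => F (seq N) - L) atTop (𝓝 (L - L)) := hFlim.sub tendsto_const_nhds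
      have h2 : Tendsto (fun N => 2/ε * (F (seq N) - L)) atTop (𝓝 (2/ε * (L - L))) :=
        tendsto_const_nhds.mul this
      simpa using h2
  obtain ⟨z, hz⟩ := cauchySeq_tendsto_of_complete hCauchy
  have hFz : Tendsto (F ∘ seq) atTop (𝓝 (F z)) := (hc.continuousAt.tendsto).comp hz
  have hFzL : F z = L := tendsto_nhds_unique hFz hFlim
  have hKn : ∀ n, ε * dist z (seq n) ≤ F (seq n) - F z := by
    intro n
    have ht1 : Tendsto (fun m => ε * dist (seq m) (seq n)) atTop (𝓝 (ε * dist z (seq n))) :=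
      tendsto_const_nhds.mul (hz.dist tendsto_const_nhds)
    have ht2 : Tendsto (fun m => F (seq n) - F (seq m)) atTop (𝓝 (F (seq n) - F z)) :=
      tendsto_const_nhds.sub hFz
    refine le_of_tendsto_of_tendsto ht1 ht2 ?_
    filter_upwards [eventually_ge_atTop n] with m hm
    exact hchain n m hm
  refine ⟨z, by have := hKn 0; rw [hseq0] at this; linarith, ?_⟩
  intro u
  by_contra hcon
  push_neg at hcon
  set c := F z - F u - ε * dist u z with hcdef
  have hcpos : 0 < c := by simp only [hcdef]; linarith
  have humem : ∀ n, F u + ε * dist u (seq n) ≤ F (seq n) := by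
    intro n
    have := hKn n
    have htri : dist u (seq n) ≤ dist u z + dist z (seq n) := dist_triangle _ _ _
    nlinarith
  have hle : ∀ n, F (seq (n+1)) ≤ F u + (1/2:ℝ)^n := by
    intro n; rw [hseqS]; exact hnxt2 (seq n) n u (humem n)
  have hFzu : F z ≤ F u := by
    have ht1 : Tendsto (fun n => F (seq (n+1))) atTop (𝓝 (F z)) := hFz.comp (tendsto_add_atTop_nat 1)
    have ht2 : Tendsto (fun n : ℕ => F u + (1/2:ℝ)^n) atTop (𝓝 (F u + 0)) := by
      exact tendsto_const_nhds.add (tendsto_pow_atTop_nhds_zero_of_lt_one (by norm_num) (by norm_num))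
    simpa using le_of_tendsto_of_tendsto ht1 ht2 (Eventually.of_forall hle)
  have : 0 ≤ ε * dist u z := mul_nonneg hε.le dist_nonneg
  nlinarith

theorem my_ekeland_on {α : Type*} [MetricSpace α] [CompleteSpace α] {s : Set α} (hs : IsClosed s)
    {F : α → ℝ} (hc : Continuous F) (h0 : ∀ x, 0 ≤ F x) {x₀ : α} (hx₀ : x₀ ∈ s) {ε : ℝ}
    (hε : 0 < ε) :
    ∃ z ∈ s, F z + ε * dist z x₀ ≤ F x₀ ∧ ∀ u ∈ s, F z ≤ F u + ε * dist u z := by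
  haveI := hs.completeSpace_coe
  obtain ⟨z, hz1, hz2⟩ := my_ekeland (F := fun w : s => F w)
    (hc.comp continuous_subtype_val) (fun x => h0 x) (⟨x₀, hx₀⟩ : s) hε
  refine ⟨z, z.2, by simpa [Subtype.dist_eq] using hz1, fun u hu => ?_⟩
  simpa [Subtype.dist_eq] using hz2 ⟨u, hu⟩

theorem weakdual_functional_exists (g : WeakDual ℝ X →L[ℝ] ℝ) :
    ∃ v : X, ∀ w : WeakDual ℝ X, g w = w v := by
  have hU : g ⁻¹' (ball (0:ℝ) 1) ∈ 𝓝 (0 : WeakDual ℝ X) := by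
    apply g.continuous.continuousAt.preimage_mem_nhds
    simpa using ball_mem_nhds (0:ℝ) one_pos
  obtain ⟨V, hV, hVU⟩ := ((topDualPairing ℝ X).hasBasis_weakBilin.mem_iff).1 hU
  obtain ⟨s, r, hr, rfl⟩ := (topDualPairing ℝ X).toSeminormFamily.basisSets_iff.1 hV
  simp only [id] at hVU
  -- evaluation linear maps
  let L : s → (WeakDual ℝ X →ₗ[ℝ] ℝ) := fun v => (topDualPairing ℝ X).flip v
  have hker : ⨅ v : s, LinearMap.ker (L v) ≤ LinearMap.ker (g : WeakDual ℝ X →ₗ[ℝ] ℝ) := by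
    intro w hw
    simp only [Submodule.mem_iInf, LinearMap.mem_ker] at hw ⊢
    have hmem : ∀ c : ℝ, (c • w) ∈ (s.sup (topDualPairing ℝ X).toSeminormFamily).ball 0 r := by
      intro c
      refine (Seminorm.mem_ball_zero _).2 ?_
      rcases s.eq_empty_or_nonempty with hs | hs
      · simp [hs]; exact hr
      · apply Seminorm.finset_sup_apply_lt hr
        intro v hv
        have hwv : ((topDualPairing ℝ X) w) v = 0 := hw ⟨v, hv⟩
        change ‖(c • w : WeakDual ℝ X) v‖ < r
        have h0 : (c • w : WeakDual ℝ X) v = c * w v := rfl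
        have hwv' : w v = 0 := hwv
        rw [h0, hwv', mul_zero, norm_zero]
        exact hr
    by_contra hgw
    have hlt : ∀ c : ℝ, |g (c • w)| < 1 := by
      intro c
      have h : g (c • w) ∈ ball (0:ℝ) 1 := hVU (hmem c)
      simpa [Real.norm_eq_abs] using mem_ball_zero_iff.1 h
    have hgw' : (g w : ℝ) ≠ 0 := hgw
    have := hlt (2 / g w)
    rw [_root_.map_smul] at this
    rw [smul_eq_mul, div_mul_cancel₀ _ hgw'] at this
    norm_num at this
  have hspan := mem_span_of_iInf_ker_le_ker (𝕜 := ℝ) hker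
  obtain ⟨c, hc⟩ := (Submodule.mem_span_range_iff_exists_fun ℝ).1 hspan
  refine ⟨∑ v : s, c v • (v : X), fun w => ?_⟩
  have h2 := LinearMap.congr_fun hc w
  simp only [LinearMap.coe_sum, Finset.sum_apply, LinearMap.smul_apply] at h2
  have h3 : (g w : ℝ) = ∑ v : s, c v • (L v) w := h2.symm
  rw [h3, map_sum]
  congr 1
  ext v
  rw [_root_.map_smul]
  rfl

instance : LocallyConvexSpace ℝ (WeakDual ℝ X) :=
  WeakBilin.locallyConvexSpace (B := topDualPairing ℝ X)

theorem exists_separation_of_norm_gt {Δ : Set (StrongDual ℝ X)}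
    (hne : Δ.Nonempty) (hconv : Convex ℝ Δ)
    (hclosed : IsClosed (StrongDual.toWeakDual '' Δ)) {ε : ℝ} (hε : 0 ≤ ε)
    (h : ∀ w ∈ Δ, ε < ‖w‖) :
    ∃ v : X, v ≠ 0 ∧ ∃ c : ℝ, ε * ‖v‖ < c ∧ ∀ w ∈ Δ, c < w v := by
  set K : Set (WeakDual ℝ X) := ⇑WeakDual.toStrongDual ⁻¹' closedBall 0 ε with hK
  have hKcomp : IsCompact K := WeakDual.isCompact_closedBall (𝕜 := ℝ) 0 ε
  have hKconv : Convex ℝ K := by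
    intro w1 h1 w2 h2 a b ha hb hab
    simp only [hK, mem_preimage, mem_closedBall, dist_zero_right] at h1 h2 ⊢
    have key : WeakDual.toStrongDual (a • w1 + b • w2) =
        a • WeakDual.toStrongDual w1 + b • WeakDual.toStrongDual w2 := rfl
    rw [key]
    calc ‖a • WeakDual.toStrongDual w1 + b • WeakDual.toStrongDual w2‖
        ≤ ‖a • WeakDual.toStrongDual w1‖ + ‖b • WeakDual.toStrongDual w2‖ := norm_add_le _ _
      _ = a * ‖WeakDual.toStrongDual w1‖ + b * ‖WeakDual.toStrongDual w2‖ := by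
          rw [norm_smul, norm_smul, Real.norm_eq_abs, Real.norm_eq_abs,
            abs_of_nonneg ha, abs_of_nonneg hb]
      _ ≤ a * ε + b * ε :=
          add_le_add (mul_le_mul_of_nonneg_left h1 ha) (mul_le_mul_of_nonneg_left h2 hb)
      _ = ε := by rw [← add_mul, hab, one_mul]
  have hCconv : Convex ℝ (StrongDual.toWeakDual '' Δ) :=
    hconv.linear_image (StrongDual.toWeakDual (𝕜 := ℝ) (E := X)).toLinearMap
  have hdisj : Disjoint K (StrongDual.toWeakDual '' Δ) := by
    rw [Set.disjoint_left]
    rintro w hwK ⟨φ, hφ, rfl⟩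
    simp only [hK, mem_preimage, mem_closedBall, dist_zero_right] at hwK
    exact absurd hwK (not_le.2 (h φ hφ))
  obtain ⟨g, u, v', hgu, huv, hgv⟩ :=
    geometric_hahn_banach_compact_closed hKconv hKcomp hCconv hclosed hdisj
  obtain ⟨v₀, hv₀⟩ := weakdual_functional_exists g
  have hv0ne : v₀ ≠ 0 := by
    rintro rfl
    obtain ⟨w, hw⟩ := hne
    have h1 : g 0 < u := hgu 0 (by simp [hK, hε])
    have h2 : v' < g (StrongDual.toWeakDual w) := hgv _ ⟨w, hw, rfl⟩
    rw [hv₀] at h2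
    simp only [map_zero] at h1
    have : (StrongDual.toWeakDual w) (0 : X) = 0 := map_zero _
    rw [this] at h2
    linarith
  refine ⟨v₀, hv0ne, v', ?_, fun w hw => ?_⟩
  · obtain ⟨φ₀, hφ₀n, hφ₀v⟩ := exists_dual_vector ℝ v₀ (norm_ne_zero_iff.2 hv0ne)
    have hφK : StrongDual.toWeakDual (ε • φ₀) ∈ K := by
      simp only [hK, mem_preimage, mem_closedBall, dist_zero_right]
      have key : WeakDual.toStrongDual (StrongDual.toWeakDual (ε • φ₀)) = ε • φ₀ := rfl
      rw [key, norm_smul, hφ₀n, Real.norm_eq_abs, abs_of_nonneg hε, mul_one]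
    have h1 : g (StrongDual.toWeakDual (ε • φ₀)) < u := hgu _ hφK
    rw [hv₀] at h1
    have heval : (StrongDual.toWeakDual (ε • φ₀)) v₀ = ε * ‖v₀‖ := by
      have : (StrongDual.toWeakDual (ε • φ₀)) v₀ = (ε • φ₀) v₀ := rfl
      rw [this]
      simp only [ContinuousLinearMap.smul_apply, smul_eq_mul]
      rw [hφ₀v]
      norm_num
    rw [heval] at h1
    linarith
  ·
    have h2 : v' < g (StrongDual.toWeakDual w) := hgv _ ⟨w, hw, rfl⟩
    rw [hv₀] at h2
    exact h2


theorem neg_le_diniPlus {F : X → ℝ} {x : X} {ε δ : ℝ} (hε : 0 ≤ ε) (hδ : 0 < δ)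
    (h : ∀ u ∈ ball x δ, F x ≤ F u + ε * ‖u - x‖) (v : X) :
    -(ε * ‖v‖) ≤ diniPlus F x v := by
  have hev : ∀ᶠ t in 𝓝[>] (0:ℝ), -(ε * ‖v‖) ≤ (F (x + t • v) - F x) / t := by
    have hmem : Ioo (0:ℝ) (δ / (‖v‖ + 1)) ∈ 𝓝[>] (0:ℝ) :=
      Ioo_mem_nhdsGT_of_mem ⟨le_refl _, by positivity⟩
    filter_upwards [hmem] with t ht
    have ht0 : 0 < t := ht.1
    have htv : t * ‖v‖ < δ := by
      have h1 : t * (‖v‖ + 1) < δ := by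
        rw [← lt_div_iff₀ (by positivity)]; exact ht.2
      nlinarith [ht0]
    have hu : x + t • v ∈ ball x δ := by
      rw [mem_ball, dist_eq_norm, add_sub_cancel_left, norm_smul, Real.norm_eq_abs,
        abs_of_pos ht0]
      exact htv
    have hh := h _ hu
    rw [add_sub_cancel_left, norm_smul, Real.norm_eq_abs, abs_of_pos ht0] at hh
    rw [le_div_iff₀ ht0]
    nlinarith
  rw [diniPlus, Filter.limsup_eq]
  rcases ({a : ℝ | ∀ᶠ t in 𝓝[>] (0:ℝ), (F (x + t • v) - F x) / t ≤ a}).eq_empty_or_nonempty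
    with he | hne
  · rw [he, Real.sInf_empty]
    have : 0 ≤ ε * ‖v‖ := mul_nonneg hε (norm_nonneg _)
    linarith
  · refine le_csInf hne ?_
    intro b hb
    obtain ⟨t, h1, h2⟩ := (hev.and hb).exists
    linarith

theorem clarkeDeriv_le_of {φ : Y → ℝ} {z v : Y} {a c : ℝ}
    (hlow : ∀ᶠ p in ((𝓝 z) ×ˢ (𝓝[>] (0:ℝ))), c ≤ (φ (p.1 + p.2 • v) - φ p.1) / p.2)
    (hup : ∀ᶠ p in ((𝓝 z) ×ˢ (𝓝[>] (0:ℝ))), (φ (p.1 + p.2 • v) - φ p.1) / p.2 ≤ a) :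
    clarkeDeriv φ z v ≤ a := by
  rw [clarkeDeriv, Filter.limsup_eq]
  refine csInf_le ⟨c, ?_⟩ hup
  rintro b hb
  obtain ⟨p, h1, h2⟩ := (hlow.and hb).exists
  linarith

theorem norm_quot_lower (z v : Y) :
    ∀ᶠ p in ((𝓝 z) ×ˢ (𝓝[>] (0:ℝ))), -‖v‖ ≤ (‖p.1 + p.2 • v‖ - ‖p.1‖) / p.2 := by
  filter_upwards [prod_mem_prod (univ_mem (f := 𝓝 z)) self_mem_nhdsWithin] with p hp
  have ht0 : (0:ℝ) < p.2 := hp.2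
  rw [le_div_iff₀ ht0]
  have h1 : ‖p.1‖ - ‖p.1 + p.2 • v‖ ≤ ‖p.2 • v‖ := by
    have := norm_sub_norm_le p.1 (p.1 + p.2 • v)
    rw [show p.1 - (p.1 + p.2 • v) = -(p.2 • v) by abel, norm_neg] at this
    linarith
  rw [norm_smul, Real.norm_eq_abs, abs_of_pos ht0] at h1
  nlinarith

theorem clarkeDeriv_norm_le (z v : Y) : clarkeDeriv (fun w : Y => ‖w‖) z v ≤ ‖v‖ := by
  refine clarkeDeriv_le_of (norm_quot_lower z v) ?_
  filter_upwards [prod_mem_prod (univ_mem (f := 𝓝 z)) self_mem_nhdsWithin] with p hp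
  have ht0 : (0:ℝ) < p.2 := hp.2
  rw [div_le_iff₀ ht0]
  have h1 : ‖p.1 + p.2 • v‖ - ‖p.1‖ ≤ ‖p.2 • v‖ := by
    have := norm_add_le p.1 (p.2 • v); linarith [this]
  rw [norm_smul, Real.norm_eq_abs, abs_of_pos ht0] at h1
  nlinarith

theorem clarkeDeriv_norm_neg_self (z : Y) :
    clarkeDeriv (fun w : Y => ‖w‖) z (-z) ≤ -‖z‖ := by
  have key : ∀ δ > (0:ℝ), clarkeDeriv (fun w : Y => ‖w‖) z (-z) ≤ -‖z‖ + δ := by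
    intro δ hδ
    refine clarkeDeriv_le_of (norm_quot_lower z (-z)) ?_
    have hmem : (ball z (δ/2)) ×ˢ (Ioo (0:ℝ) 1) ∈ ((𝓝 z) ×ˢ (𝓝[>] (0:ℝ))) :=
      prod_mem_prod (ball_mem_nhds z (by positivity)) (Ioo_mem_nhdsGT_of_mem ⟨le_refl _, one_pos⟩)
    filter_upwards [hmem] with p hp
    have ht0 : (0:ℝ) < p.2 := hp.2.1
    have ht1 : p.2 ≤ 1 := hp.2.2.le
    have hpz : ‖p.1 - z‖ < δ/2 := by
      have := hp.1; rwa [mem_ball, dist_eq_norm] at this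
    rw [div_le_iff₀ ht0]
    have hdecomp : p.1 + p.2 • (-z) = (1 - p.2) • p.1 + p.2 • (p.1 - z) := by
      module
    have h1 : ‖p.1 + p.2 • (-z)‖ ≤ (1 - p.2) * ‖p.1‖ + p.2 * ‖p.1 - z‖ := by
      rw [hdecomp]
      refine (norm_add_le _ _).trans ?_
      rw [norm_smul, norm_smul, Real.norm_eq_abs, Real.norm_eq_abs,
        abs_of_nonneg (by linarith), abs_of_pos ht0]
    have h2 : ‖z‖ - ‖p.1 - z‖ ≤ ‖p.1‖ := by
      have := norm_sub_norm_le z p.1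
      rw [norm_sub_rev] at this
      linarith [this]
    nlinarith
  by_contra hcon
  push_neg at hcon
  have := key ((clarkeDeriv (fun w : Y => ‖w‖) z (-z) + ‖z‖)/2) (by linarith)
  linarith

theorem norm_eq_one_of_clarkeSubdiff {z : Y} (hz : z ≠ 0) {y' : StrongDual ℝ Y}
    (hy' : y' ∈ clarkeSubdiff (fun w : Y => ‖w‖) z) : ‖y'‖ = 1 := by
  have hle : ‖y'‖ ≤ 1 := by
    refine ContinuousLinearMap.opNorm_le_bound _ zero_le_one (fun v => ?_)
    rw [one_mul, Real.norm_eq_abs, abs_le]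
    constructor
    · have h1 : y' (-v) ≤ clarkeDeriv (fun w : Y => ‖w‖) z (-v) := hy' (-v)
      have h2 := clarkeDeriv_norm_le z (-v)
      rw [map_neg] at h1
      rw [norm_neg] at h2
      linarith
    · exact (hy' v).trans (clarkeDeriv_norm_le z v)
  have hzn : 0 < ‖z‖ := norm_pos_iff.2 hz
  have hge : 1 ≤ ‖y'‖ := by
    have h1 : y' (-z) ≤ clarkeDeriv (fun w : Y => ‖w‖) z (-z) := hy' (-z)
    have h2 := clarkeDeriv_norm_neg_self z
    rw [map_neg] at h1
    have h3 : ‖z‖ ≤ y' z := by linarith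
    have h4 : y' z ≤ ‖y'‖ * ‖z‖ :=
      (le_abs_self _).trans (by simpa [Real.norm_eq_abs] using y'.le_opNorm z)
    calc (1:ℝ) = ‖z‖ / ‖z‖ := by rw [div_self hzn.ne']
      _ ≤ (‖y'‖ * ‖z‖) / ‖z‖ := by gcongr; linarith
      _ = ‖y'‖ := by field_simp
  linarith

theorem banachC_nonneg (T : X →L[ℝ] Y) : 0 ≤ banachC T := by
  apply Real.sInf_nonneg
  rintro b ⟨y', _, rfl⟩
  exact norm_nonneg _

theorem banachC_le {T : X →L[ℝ] Y} {y' : StrongDual ℝ Y} (h : ‖y'‖ = 1) :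
    banachC T ≤ ‖y'.comp T‖ := by
  have hb : BddBelow ((fun y' : StrongDual ℝ Y => ‖y'.comp T‖) '' {y' | ‖y'‖ = 1}) := by
    refine ⟨0, ?_⟩
    rintro b ⟨z, _, rfl⟩
    exact norm_nonneg _
  exact csInf_le hb ⟨y', h, rfl⟩

theorem banachC_sub_le [Nontrivial Y] (S T : X →L[ℝ] Y) :
    banachC S ≤ banachC T + ‖S - T‖ := by
  obtain ⟨v, hv⟩ := exists_ne (0 : Y)
  obtain ⟨φ, hφn, _⟩ := exists_dual_vector ℝ v (norm_ne_zero_iff.2 hv)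
  have hne : ((fun y' : StrongDual ℝ Y => ‖y'.comp T‖) '' {y' | ‖y'‖ = 1}).Nonempty :=
    ⟨‖φ.comp T‖, φ, hφn, rfl⟩
  have key : banachC S - ‖S - T‖ ≤ banachC T := by
    show banachC S - ‖S - T‖ ≤ sInf ((fun y' : StrongDual ℝ Y => ‖y'.comp T‖) '' {y' | ‖y'‖ = 1})
    refine le_csInf hne ?_
    rintro b ⟨y', hy', rfl⟩
    show banachC S - ‖S - T‖ ≤ ‖y'.comp T‖
    have h1 : banachC S ≤ ‖y'.comp S‖ := banachC_le hy'
    have h2 : ‖y'.comp S‖ ≤ ‖y'.comp T‖ + ‖S - T‖ := by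
      have h3 : y'.comp S - y'.comp T = y'.comp (S - T) := by
        ext u; simp
      have h4 : ‖y'.comp S - y'.comp T‖ ≤ ‖S - T‖ := by
        rw [h3]
        refine (y'.opNorm_comp_le (S - T)).trans ?_
        rw [hy', one_mul]
      have := norm_sub_norm_le (y'.comp S) (y'.comp T)
      linarith
    linarith
  linarith

theorem surJ_nonneg (Jf : X → Set (X →L[ℝ] Y)) (x : X) : 0 ≤ surJ Jf x := by
  apply Real.sSup_nonneg
  rintro b ⟨r, hr, rfl⟩
  apply Real.sInf_nonneg
  rintro b ⟨T, _, rfl⟩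
  exact banachC_nonneg T

theorem surJ_le_banachC [Nontrivial Y] {Jf : X → Set (X →L[ℝ] Y)} {x : X} {T : X →L[ℝ] Y}
    (hT : T ∈ closure (convexHull ℝ (Jf x))) : surJ Jf x ≤ banachC T := by
  refine Real.sSup_le ?_ (banachC_nonneg T)
  rintro b ⟨r, hr, rfl⟩
  have hsub : convexHull ℝ (Jf x) ⊆ convexHull ℝ (⋃ z ∈ ball x r, Jf z) :=
    convexHull_mono (fun S hS => mem_biUnion (mem_ball_self hr) hS)
  refine le_of_forall_pos_le_add (fun η hη => ?_)
  obtain ⟨S, hS, hST⟩ := Metric.mem_closure_iff.1 hT η hη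
  have h1 : sInf (banachC '' convexHull ℝ (⋃ z ∈ ball x r, Jf z)) ≤ banachC S := by
    have hb : BddBelow (banachC '' convexHull ℝ (⋃ z ∈ ball x r, Jf z)) := by
      refine ⟨0, ?_⟩
      rintro b ⟨U, _, rfl⟩
      exact banachC_nonneg U
    exact csInf_le hb ⟨S, hsub hS, rfl⟩
  have h2 : banachC S ≤ banachC T + ‖S - T‖ := banachC_sub_le S T
  have h3 : ‖S - T‖ < η := by rwa [dist_eq_norm, norm_sub_rev] at hST
  linarith

theorem surJ_le_of_ekeland {f : X → Y} {Jf : X → Set (X →L[ℝ] Y)}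
    (hcr : ChainRuleCond f Jf univ) {x : X} {y : Y} (hne : y ≠ f x)
    {ε δ : ℝ} (hε : 0 ≤ ε) (hδ : 0 < δ)
    (hE : ∀ u ∈ ball x δ, ‖f x - y‖ ≤ ‖f u - y‖ + ε * ‖u - x‖) :
    surJ Jf x ≤ ε := by
  haveI : Nontrivial Y := nontrivial_of_ne (f x) y (Ne.symm hne)
  obtain ⟨hclosed, hconv, hpj⟩ := hcr x (mem_univ x) y hne
  obtain ⟨hΔne, hineq⟩ := hpj
  by_contra hcon
  push_neg at hcon
  have hfxy : f x - y ≠ 0 := sub_ne_zero.2 (Ne.symm hne)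
  have hwsurJ : ∀ w ∈ DeltaF f Jf y x, surJ Jf x ≤ ‖w‖ := by
    rintro w ⟨y', hy', T, hT, rfl⟩
    have hy'n : ‖y'‖ = 1 := norm_eq_one_of_clarkeSubdiff hfxy hy'
    calc surJ Jf x ≤ banachC T := surJ_le_banachC hT
      _ ≤ ‖y'.comp T‖ := banachC_le hy'n
  have hgt : ∀ w ∈ DeltaF f Jf y x, ε < ‖w‖ :=
    fun w hw => lt_of_lt_of_le hcon (hwsurJ w hw)
  obtain ⟨v₀, hv0, c, hc1, hc2⟩ := exists_separation_of_norm_gt hΔne hconv hclosed hε hgt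
  have h1 := hineq (ContinuousLinearMap.id ℝ ℝ) (-v₀)
  have hRHS : sSup ((fun T : X →L[ℝ] ℝ =>
      (ContinuousLinearMap.id ℝ ℝ) (T (-v₀))) '' DeltaF f Jf y x) ≤ -c := by
    apply csSup_le (hΔne.image _)
    rintro b ⟨w, hw, rfl⟩
    have hwv := hc2 w hw
    show (ContinuousLinearMap.id ℝ ℝ) (w (-v₀)) ≤ -c
    have : (ContinuousLinearMap.id ℝ ℝ) (w (-v₀)) = -(w v₀) := by simp
    rw [this]
    linarith
  have hL := neg_le_diniPlus (F := fun z => ‖f z - y‖) (x := x) hε hδ hE (-v₀)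
  rw [norm_neg] at hL
  have hdini : diniPlus (fun z => (ContinuousLinearMap.id ℝ ℝ) (‖f z - y‖)) x (-v₀)
      = diniPlus (fun z => ‖f z - y‖) x (-v₀) := rfl
  rw [hdini] at h1
  linarith

theorem solve_in_ball [CompleteSpace X] {f : X → Y} (hfc : Continuous f)
    {Jf : X → Set (X →L[ℝ] Y)} (hcr : ChainRuleCond f Jf univ)
    {x₀ : X} {y : Y} {R m : ℝ} (hR : 0 < R) (hm : 0 < m)
    (hsur : ∀ z ∈ closedBall x₀ R, m ≤ surJ Jf z)
    (hlt : ‖y - f x₀‖ < m * R) :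
    ∃ x ∈ closedBall x₀ R, f x = y := by
  rcases eq_or_ne (f x₀) y with h0 | h0
  · exact ⟨x₀, mem_closedBall_self hR.le, h0⟩
  set D := ‖y - f x₀‖ with hD
  have hD0 : 0 < D := norm_pos_iff.2 (sub_ne_zero.2 (Ne.symm h0))
  set ε := (D / R + m) / 2 with hεdef
  have hDRm : D / R < m := by rw [div_lt_iff₀ hR]; linarith [hlt]
  have hε0 : 0 < ε := by positivity
  have hεm : ε < m := by rw [hεdef]; linarith
  have hDR : D / R < ε := by rw [hεdef]; linarith
  have hDεR : D / ε < R := by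
    rw [div_lt_iff₀ hε0]
    rw [div_lt_iff₀ hR] at hDR
    linarith
  obtain ⟨z, hzball, hz1, hz2⟩ := my_ekeland_on (Metric.isClosed_closedBall (x := x₀) (ε := R))
    (F := fun u => ‖f u - y‖) ((hfc.sub continuous_const).norm)
    (fun u => norm_nonneg _) (mem_closedBall_self hR.le) hε0
  by_cases hfz : f z = y
  · exact ⟨z, hzball, hfz⟩
  exfalso
  have hfx₀ : ‖f x₀ - y‖ = D := by rw [hD, norm_sub_rev]
  have hdist : dist z x₀ ≤ D / ε := by
    rw [le_div_iff₀ hε0]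
    have h2 : 0 ≤ ‖f z - y‖ := norm_nonneg _
    rw [hfx₀] at hz1
    linarith [hz1]
  have hδ : 0 < R - D / ε := by linarith
  have hEk : ∀ u ∈ ball z (R - D / ε), ‖f z - y‖ ≤ ‖f u - y‖ + ε * ‖u - z‖ := by
    intro u hu
    have hu' : u ∈ closedBall x₀ R := by
      rw [mem_closedBall]
      have h3 : dist u x₀ ≤ dist u z + dist z x₀ := dist_triangle _ _ _
      have h4 : dist u z < R - D / ε := mem_ball.1 hu
      linarith
    have := hz2 u hu'
    rwa [dist_eq_norm] at this
  have hkey := surJ_le_of_ekeland hcr (Ne.symm hfz) hε0.le hδ hEk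
  have := hsur z hzball
  linarith

theorem anti_integral_le {g : ℝ → ℝ} (hg : Antitone g) {a b C : ℝ} (hab : a ≤ b)
    (hC : ∀ ρ ∈ Ioc a b, g ρ ≤ C) : (∫ ρ in a..b, g ρ) ≤ C * (b - a) := by
  have hInt : IntegrableOn g (Ioc a b) volume :=
    (intervalIntegrable_iff_integrableOn_Ioc_of_le hab).1 ((hg.antitoneOn _).intervalIntegrable)
  rw [intervalIntegral.integral_of_le hab]
  have hconst : (∫ _ρ in Ioc a b, C) = C * (b - a) := by
    rw [setIntegral_const, measureReal_def, Real.volume_Ioc, ENNReal.toReal_ofReal (by linarith), smul_eq_mul,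
      mul_comm]
  calc ∫ ρ in Ioc a b, g ρ ≤ ∫ _ρ in Ioc a b, C := by
        refine setIntegral_mono_on hInt ?_ measurableSet_Ioc hC
        exact integrableOn_const measure_Ioc_lt_top.ne
    _ = C * (b - a) := hconst

theorem anti_lintegral_unbounded {g : ℝ → ℝ} (hg : Antitone g) (hg0 : ∀ ρ, 0 ≤ g ρ)
    (hB : ∫⁻ ρ in Ioi (0:ℝ), ENNReal.ofReal (g ρ) = ⊤) (c : ℝ) :
    ∃ n : ℕ, c < ∫ ρ in (0:ℝ)..(n:ℝ), g ρ := by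
  by_contra hcon
  push_neg at hcon
  have hmeas : Measurable fun ρ => ENNReal.ofReal (g ρ) := hg.measurable.ennreal_ofReal
  set G := fun ρ => ENNReal.ofReal (g ρ) with hG
  have key : ∀ ρ : ℝ, (Ioi (0:ℝ)).indicator G ρ = ⨆ n : ℕ, (Ioc (0:ℝ) (n:ℝ)).indicator G ρ := by
    intro ρ
    by_cases hρ : ρ ∈ Ioi (0:ℝ)
    · rw [indicator_of_mem hρ]
      apply le_antisymm
      · have hle : ρ ≤ (⌈ρ⌉₊ : ℝ) := Nat.le_ceil ρ
        refine le_trans ?_ (le_iSup _ ⌈ρ⌉₊)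
        rw [indicator_of_mem (show ρ ∈ Ioc (0:ℝ) ((⌈ρ⌉₊:ℕ):ℝ) from ⟨hρ, hle⟩)]
      · refine iSup_le fun n => ?_
        by_cases h : ρ ∈ Ioc (0:ℝ) (n:ℝ)
        · rw [indicator_of_mem h]
        · rw [indicator_of_notMem h]; exact zero_le
    · rw [indicator_of_notMem hρ]
      symm
      simp only [ENNReal.iSup_eq_zero]
      intro n
      have : ρ ∉ Ioc (0:ℝ) (n:ℝ) := fun h => hρ h.1
      rw [indicator_of_notMem this]
  have h1 : ∫⁻ ρ in Ioi (0:ℝ), G ρ = ⨆ n : ℕ, ∫⁻ ρ in Ioc (0:ℝ) (n:ℝ), G ρ := by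
    rw [← lintegral_indicator measurableSet_Ioi G]
    calc ∫⁻ ρ, (Ioi (0:ℝ)).indicator G ρ
        = ∫⁻ ρ, ⨆ n : ℕ, (Ioc (0:ℝ) (n:ℝ)).indicator G ρ := by
          congr 1; ext ρ; exact key ρ
      _ = ⨆ n : ℕ, ∫⁻ ρ, (Ioc (0:ℝ) (n:ℝ)).indicator G ρ := by
          refine lintegral_iSup (fun n => hmeas.indicator measurableSet_Ioc) ?_
          intro i j hij
          exact indicator_le_indicator_of_subset
            (Ioc_subset_Ioc_right (by exact_mod_cast hij)) (fun a => zero_le)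
      _ = ⨆ n : ℕ, ∫⁻ ρ in Ioc (0:ℝ) (n:ℝ), G ρ := by
          congr 1; ext n; exact lintegral_indicator measurableSet_Ioc G
  have h2 : ∀ n : ℕ, ∫⁻ ρ in Ioc (0:ℝ) (n:ℝ), G ρ
      = ENNReal.ofReal (∫ ρ in (0:ℝ)..(n:ℝ), g ρ) := by
    intro n
    have hn0 : (0:ℝ) ≤ (n:ℝ) := Nat.cast_nonneg n
    have hint : IntegrableOn g (Ioc (0:ℝ) (n:ℝ)) volume :=
      (intervalIntegrable_iff_integrableOn_Ioc_of_le hn0).1 ((hg.antitoneOn _).intervalIntegrable)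
    rw [intervalIntegral.integral_of_le hn0]
    exact (ofReal_integral_eq_lintegral_ofReal hint (ae_of_all _ hg0)).symm
  rw [h1] at hB
  have h3 : (⨆ n : ℕ, ∫⁻ ρ in Ioc (0:ℝ) (n:ℝ), G ρ) ≤ ENNReal.ofReal c := by
    refine iSup_le fun n => ?_
    rw [h2 n]
    exact ENNReal.ofReal_le_ofReal (hcon n)
  rw [hB] at h3
  exact absurd (h3.trans_lt ENNReal.ofReal_lt_top) (lt_irrefl ⊤)

end Helpers

set_option maxHeartbeats 2000000

/-- Hadamard-type global surjection: if `∫₀^∞ inf_{‖x‖≤ρ} sur Jf(x) dρ = ∞` then `f` is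
surjective, open with linear rate at every point, and
`B(f(0); ∫₀^r inf_{‖x‖≤ρ} sur Jf(x) dρ) ⊆ f(B(0;r))` for all `r > 0`. -/
theorem hadamard_global_surjection {X Y : Type*}
    [NormedAddCommGroup X] [NormedSpace ℝ X] [CompleteSpace X]
    [NormedAddCommGroup Y] [NormedSpace ℝ Y] [CompleteSpace Y]
    (f : X → Y) (hf : LocallyLipschitz f)
    (Jf : X → Set (X →L[ℝ] Y)) (hJf : ∀ x : X, IsPseudoJacobianAt f x (Jf x))
    (hcr : ChainRuleCond f Jf Set.univ)
    (μ : ℝ → ℝ) (hμ : ∀ ρ : ℝ, μ ρ = sInf {c : ℝ | ∃ x : X, ‖x‖ ≤ ρ ∧ c = surJ Jf x})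
    (hB : ∫⁻ ρ in Ioi (0 : ℝ), ENNReal.ofReal (μ ρ) = ⊤) :
    Function.Surjective f ∧
    (∀ x : X, OpenWithLinearRateAt f x) ∧
    (∀ r > (0 : ℝ), ball (f 0) (∫ ρ in (0 : ℝ)..r, μ ρ) ⊆ f '' ball 0 r) := by
  classical
  have hfc : Continuous f := hf.continuous
  have hsurnn : ∀ x : X, 0 ≤ surJ Jf x := fun x => surJ_nonneg Jf x
  have hμbdd : ∀ ρ : ℝ, BddBelow {c : ℝ | ∃ x : X, ‖x‖ ≤ ρ ∧ c = surJ Jf x} := by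
    intro ρ; exact ⟨0, by rintro c ⟨x, _, rfl⟩; exact hsurnn x⟩
  have hμnn : ∀ ρ : ℝ, 0 ≤ μ ρ := by
    intro ρ; rw [hμ]; exact Real.sInf_nonneg (by rintro c ⟨x, _, rfl⟩; exact hsurnn x)
  have hμle : ∀ (x : X) (ρ : ℝ), ‖x‖ ≤ ρ → μ ρ ≤ surJ Jf x := by
    intro x ρ hx; rw [hμ]; exact csInf_le (hμbdd ρ) ⟨x, hx, rfl⟩
  have hμanti : ∀ a b : ℝ, 0 ≤ a → a ≤ b → μ b ≤ μ a := by
    intro a b ha hab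
    rw [hμ a, hμ b]
    refine csInf_le_csInf (hμbdd b) ⟨surJ Jf 0, 0, by simpa using ha, rfl⟩ ?_
    rintro c ⟨x, hx, rfl⟩; exact ⟨x, hx.trans hab, rfl⟩
  set ν : ℝ → ℝ := fun ρ => μ (max ρ 0) with hν
  have hνanti : Antitone ν := fun a b hab =>
    hμanti (max a 0) (max b 0) (le_max_right a 0) (max_le_max hab (le_refl 0))
  have hνeq : ∀ ρ : ℝ, 0 ≤ ρ → ν ρ = μ ρ := by
    intro ρ hρ; simp only [hν]; rw [max_eq_left hρ]
  have hνnn : ∀ ρ : ℝ, 0 ≤ ν ρ := fun ρ => hμnn _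
  set I : ℝ → ℝ := fun s => ∫ ρ in (0:ℝ)..s, ν ρ with hI
  have hνint : ∀ a b : ℝ, IntervalIntegrable ν volume a b :=
    fun a b => (hνanti.antitoneOn _).intervalIntegrable
  have hIflux : ∀ a b : ℝ, I b - I a = ∫ ρ in a..b, ν ρ := by
    intro a b
    have h := intervalIntegral.integral_add_adjacent_intervals (hνint 0 a) (hνint a b)
    simp only [hI]; linarith [h]
  have hImono : ∀ a b : ℝ, a ≤ b → I a ≤ I b := by
    intro a b hab
    have h1 : 0 ≤ ∫ ρ in a..b, ν ρ := intervalIntegral.integral_nonneg hab (fun u _ => hνnn u)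
    have h2 := hIflux a b; linarith
  have hIub : ∀ a b C : ℝ, a ≤ b → (∀ ρ ∈ Ioc a b, ν ρ ≤ C) → I b - I a ≤ C * (b - a) := by
    intro a b C hab hC
    rw [hIflux a b]; exact anti_integral_le hνanti hab hC
  set M : ℝ := ν 0 with hMdef
  have hM0 : 0 ≤ M := hνnn 0
  have hIMdiff : ∀ a b : ℝ, 0 ≤ a → a ≤ b → I b - I a ≤ M * (b - a) := by
    intro a b ha hab
    refine hIub a b M hab (fun ρ hρ => ?_)
    exact hνanti (le_of_lt (lt_of_le_of_lt ha hρ.1))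
  -- positivity of μ on [0, ∞)
  have hμpos : ∀ ρ : ℝ, 0 ≤ ρ → 0 < μ ρ := by
    intro ρ₀ hρ₀
    by_contra hc
    push_neg at hc
    have hz : μ ρ₀ = 0 := le_antisymm hc (hμnn ρ₀)
    have hbound : ∀ ρ ∈ Ioi (0:ℝ), ENNReal.ofReal (μ ρ)
        ≤ (Ioc (0:ℝ) ρ₀).indicator (fun _ => ENNReal.ofReal (μ 0)) ρ := by
      intro ρ hρ
      by_cases h : ρ ≤ ρ₀
      · rw [indicator_of_mem (show ρ ∈ Ioc (0:ℝ) ρ₀ from ⟨hρ, h⟩)]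
        exact ENNReal.ofReal_le_ofReal (hμanti 0 ρ le_rfl (le_of_lt hρ))
      · push_neg at h
        have h2 : μ ρ ≤ 0 := hz ▸ hμanti ρ₀ ρ hρ₀ h.le
        rw [indicator_of_notMem (fun hh => absurd hh.2 (not_le.2 h))]
        exact le_of_eq_of_le (ENNReal.ofReal_eq_zero.2 h2) zero_le
    have hle2 : ∫⁻ ρ in Ioi (0:ℝ), ENNReal.ofReal (μ ρ)
        ≤ ∫⁻ ρ in Ioi (0:ℝ), (Ioc (0:ℝ) ρ₀).indicator (fun _ => ENNReal.ofReal (μ 0)) ρ :=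
      setLIntegral_mono (measurable_const.indicator measurableSet_Ioc) hbound
    have hfin : ∫⁻ ρ in Ioi (0:ℝ), (Ioc (0:ℝ) ρ₀).indicator (fun _ => ENNReal.ofReal (μ 0)) ρ < ⊤ := by
      rw [lintegral_indicator measurableSet_Ioc]
      rw [setLIntegral_const]
      refine ENNReal.mul_lt_top ENNReal.ofReal_lt_top ?_
      calc (volume.restrict (Ioi (0:ℝ))) (Ioc (0:ℝ) ρ₀) ≤ volume (Ioc (0:ℝ) ρ₀) :=
            Measure.restrict_le_self _
        _ < ⊤ := measure_Ioc_lt_top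
    rw [hB] at hle2
    exact absurd (hle2.trans_lt hfin) (lt_irrefl ⊤)
  have hBν : ∫⁻ ρ in Ioi (0:ℝ), ENNReal.ofReal (ν ρ) = ⊤ := by
    rw [← hB]
    refine setLIntegral_congr_fun measurableSet_Ioi (fun ρ hρ => ?_)
    rw [hνeq ρ (le_of_lt hρ)]
  -- the key covering statement
  have keyC : ∀ r : ℝ, 0 < r → ∀ y : Y, ‖y - f 0‖ < I r → ∃ x : X, ‖x‖ ≤ r ∧ f x = y := by
    intro r hr y hy
    set d := ‖y - f 0‖ with hd
    have hd0 : 0 ≤ d := norm_nonneg _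
    have hIr : 0 < I r := lt_of_le_of_lt hd0 hy
    set θ := (d / I r + 1) / 2 with hθdef
    have hdIr : d / I r < 1 := (div_lt_one hIr).2 hy
    have hθ1 : θ < 1 := by rw [hθdef]; linarith
    have hθ0 : 0 < θ := by rw [hθdef]; positivity
    have hdθ : d < θ * I r := by
      have e1 : (d / I r) * I r = d := div_mul_cancel₀ d hIr.ne'
      rw [hθdef]
      nlinarith
    set A := {s : ℝ | (s ∈ Icc (0:ℝ) r) ∧
      ∀ y' : Y, ‖y' - f 0‖ < θ * I s → ∃ x : X, ‖x‖ ≤ s ∧ f x = y'} with hA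
    have hI0 : I 0 = 0 := intervalIntegral.integral_same
    have h0A : (0:ℝ) ∈ A := by
      refine ⟨⟨le_rfl, hr.le⟩, fun y' hy' => absurd hy' (not_lt.2 ?_)⟩
      rw [hI0, mul_zero]; exact norm_nonneg _
    have hAne : A.Nonempty := ⟨0, h0A⟩
    have hAbdd : BddAbove A := ⟨r, fun s hs => hs.1.2⟩
    set σ := sSup A with hσdef
    have hσ0 : 0 ≤ σ := le_csSup hAbdd h0A
    have hσr : σ ≤ r := csSup_le hAne (fun s hs => hs.1.2)
    have hσA : σ ∈ A := by
      refine ⟨⟨hσ0, hσr⟩, ?_⟩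
      intro y' hy'
      set D := ‖y' - f 0‖ with hD
      have hgap : 0 < θ * I σ - D := by linarith
      set η := (θ * I σ - D) / (θ * (M + 1)) with hη
      have hη0 : 0 < η := div_pos hgap (by positivity)
      obtain ⟨s, hsA, hs⟩ := exists_lt_of_lt_csSup hAne
        (show σ - η < sSup A by rw [← hσdef]; linarith)
      have hsσ : s ≤ σ := le_csSup hAbdd hsA
      have hs0 : 0 ≤ s := hsA.1.1
      have h1 : I σ - I s ≤ M * (σ - s) := hIMdiff s σ hs0 hsσ
      have h2 : M * (σ - s) ≤ M * η := by nlinarith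
      have h3 : θ * (M * η) < θ * I σ - D := by
        have e : θ * (M * ((θ * I σ - D) / (θ * (M + 1))))
            = (θ * I σ - D) * (M / (M + 1)) := by
          field_simp
        have hfrac : M / (M + 1) < 1 := by
          rw [div_lt_one (by linarith)]; linarith
        rw [hη, e]
        nlinarith
      have hDs : D < θ * I s := by nlinarith
      obtain ⟨x, hx, hfx⟩ := hsA.2 y' hDs
      exact ⟨x, hx.trans hsσ, hfx⟩
    have hσeq : σ = r := by
      by_contra hneq
      have hσlt : σ < r := lt_of_le_of_ne hσr hneq
      set L := sSup (ν '' Ioc σ r) with hLdef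
      have hLbddA : BddAbove (ν '' Ioc σ r) := by
        refine ⟨M, ?_⟩; rintro b ⟨ρ, hρ, rfl⟩
        exact hνanti (le_of_lt (lt_of_le_of_lt hσ0 hρ.1))
      have hLne : (ν '' Ioc σ r).Nonempty := ⟨ν r, r, ⟨hσlt, le_rfl⟩, rfl⟩
      have hνrL : ν r ≤ L := le_csSup hLbddA ⟨r, ⟨hσlt, le_rfl⟩, rfl⟩
      have hL0 : 0 < L := by
        have := hμpos r hr.le
        rw [← hνeq r hr.le] at this
        linarith
      have hθL : θ * L < L := by nlinarith
      obtain ⟨b, ⟨ρ₀, hρ₀, rfl⟩, hb⟩ := exists_lt_of_lt_csSup hLne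
        (show θ * L < sSup (ν '' Ioc σ r) from by rw [← hLdef]; exact hθL)
      set h := ρ₀ - σ with hhdef
      have hh0 : 0 < h := by rw [hhdef]; linarith [hρ₀.1]
      have hρ₀r : ρ₀ ≤ r := hρ₀.2
      have hρ₀0 : 0 ≤ ρ₀ := hσ0.trans hρ₀.1.le
      have hνθL : 0 < ν ρ₀ - θ * L := by linarith
      set δ' := (ν ρ₀ - θ * L) * h / 2 with hδ'def
      have hδ'0 : 0 < δ' := by rw [hδ'def]; positivity
      have hν₀pos : 0 < ν ρ₀ := by nlinarith [mul_nonneg hθ0.le hL0.le]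
      have hIρσ : I ρ₀ - I σ ≤ L * h := by
        have hres := hIub σ ρ₀ L (by linarith)
          (fun ρ hρ => le_csSup hLbddA ⟨ρ, ⟨hρ.1, hρ.2.trans hρ₀r⟩, rfl⟩)
        rw [hhdef]
        linarith
      have hstepbound : θ * (I ρ₀ - I σ) + δ' < ν ρ₀ * h := by
        have h1 : θ * (I ρ₀ - I σ) ≤ θ * (L * h) := by nlinarith
        rw [hδ'def]
        nlinarith
      have hρ₀A : ρ₀ ∈ A := by
        refine ⟨⟨hρ₀0, hρ₀r⟩, ?_⟩
        intro y' hy'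
        set D := ‖y' - f 0‖ with hD
        by_cases hcase : D < θ * I σ
        · obtain ⟨x, hx, hfx⟩ := hσA.2 y' hcase
          exact ⟨x, hx.trans (by linarith [hρ₀.1.le]), hfx⟩
        push_neg at hcase
        have hkey : ∃ x₀' : X, ‖x₀'‖ ≤ σ ∧ ‖y' - f x₀'‖ ≤ D - θ * I σ + δ' := by
          by_cases hts : θ * I σ ≤ δ'
          · refine ⟨0, by simpa using hσ0, ?_⟩
            have : ‖y' - f 0‖ = D := rfl
            rw [this]; linarith
          · push_neg at hts
            have hD0' : 0 < D := lt_of_lt_of_le (lt_trans hδ'0 hts) hcase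
            set t := θ * I σ - δ' with htdef
            have ht0 : 0 < t := by rw [htdef]; linarith
            have htD : t ≤ D := by rw [htdef]; linarith
            set y'' := f 0 + (t / D) • (y' - f 0) with hy''def
            have hy''n : ‖y'' - f 0‖ = t := by
              rw [hy''def, add_sub_cancel_left, norm_smul, Real.norm_eq_abs,
                abs_of_pos (div_pos ht0 hD0'), ← hD]
              field_simp
            have hy''lt : ‖y'' - f 0‖ < θ * I σ := by rw [hy''n, htdef]; linarith
            obtain ⟨x₀', hx₀', hfx₀'⟩ := hσA.2 y'' hy''lt
            refine ⟨x₀', hx₀', ?_⟩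
            rw [hfx₀']
            have hdiff : y' - y'' = (1 - t / D) • (y' - f 0) := by
              rw [hy''def]; module
            have htD1 : t / D ≤ 1 := (div_le_one hD0').2 htD
            rw [hdiff, norm_smul, Real.norm_eq_abs, abs_of_nonneg (by linarith), ← hD]
            have e2 : (1 - t / D) * D = D - t := by field_simp
            rw [e2, htdef]
            linarith
        obtain ⟨x₀', hx₀'n, hx₀'b⟩ := hkey
        have hlt : ‖y' - f x₀'‖ < ν ρ₀ * h := by
          have hDlt : D - θ * I σ < θ * (I ρ₀ - I σ) := by nlinarith [hy']
          linarith
        have hsur' : ∀ z ∈ closedBall x₀' h, ν ρ₀ ≤ surJ Jf z := by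
          intro z hz
          have h1 : ‖z - x₀'‖ ≤ h := by rw [← dist_eq_norm]; exact mem_closedBall.1 hz
          have hzn : ‖z‖ ≤ ρ₀ := by
            calc ‖z‖ = ‖z - x₀' + x₀'‖ := by rw [sub_add_cancel]
              _ ≤ ‖z - x₀'‖ + ‖x₀'‖ := norm_add_le _ _
              _ ≤ h + σ := add_le_add h1 hx₀'n
              _ = ρ₀ := by rw [hhdef]; ring
          rw [hνeq ρ₀ hρ₀0]
          exact hμle z ρ₀ hzn
        obtain ⟨x, hxball, hfx⟩ := solve_in_ball hfc hcr hh0 hν₀pos hsur' hlt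
        refine ⟨x, ?_, hfx⟩
        have h1 : ‖x - x₀'‖ ≤ h := by rw [← dist_eq_norm]; exact mem_closedBall.1 hxball
        calc ‖x‖ = ‖x - x₀' + x₀'‖ := by rw [sub_add_cancel]
          _ ≤ ‖x - x₀'‖ + ‖x₀'‖ := norm_add_le _ _
          _ ≤ h + σ := add_le_add h1 hx₀'n
          _ = ρ₀ := by rw [hhdef]; ring
      have : ρ₀ ≤ σ := le_csSup hAbdd hρ₀A
      linarith [hρ₀.1]
    rw [hσeq] at hσA
    exact hσA.2 y (by rw [← hd]; exact hdθ)
  refine ⟨?_, ?_, ?_⟩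
  · -- surjectivity
    intro y
    obtain ⟨n, hn⟩ := anti_lintegral_unbounded hνanti hνnn hBν ‖y - f 0‖
    have hn' : ‖y - f 0‖ < I (n:ℝ) := by simpa [hI] using hn
    have hr0 : (0:ℝ) < max (n:ℝ) 1 := lt_of_lt_of_le one_pos (le_max_right _ 1)
    have hIn : ‖y - f 0‖ < I (max (n:ℝ) 1) :=
      lt_of_lt_of_le hn' (hImono _ _ (le_max_left _ _))
    obtain ⟨x, _, hfx⟩ := keyC _ hr0 y hIn
    exact ⟨x, hfx⟩
  · -- open with linear rate
    intro x₀
    have hm0 : 0 < μ (‖x₀‖ + 2) := hμpos _ (by positivity)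
    refine ⟨ball x₀ 1, ball_mem_nhds x₀ one_pos, μ (‖x₀‖ + 2), hm0, ?_⟩
    intro x hx r hr hball y hy
    rw [mem_ball, dist_eq_norm] at hy
    rcases eq_or_ne y (f x) with rfl | hne
    · exact ⟨x, mem_ball_self hr, rfl⟩
    have hd0 : 0 < ‖y - f x‖ := norm_pos_iff.2 (sub_ne_zero.2 hne)
    set m := μ (‖x₀‖ + 2) with hmdef
    set R := (‖y - f x‖ / m + r) / 2 with hRdef
    have h1 : ‖y - f x‖ / m < r := (div_lt_iff₀ hm0).2 (by linarith [hy])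
    have hdm0 : 0 < ‖y - f x‖ / m := div_pos hd0 hm0
    have hR0 : 0 < R := by rw [hRdef]; positivity
    have hRr : R < r := by rw [hRdef]; linarith
    have hdmR : ‖y - f x‖ / m < R := by rw [hRdef]; linarith
    have hdd : ‖y - f x‖ < m * R := by
      rw [div_lt_iff₀ hm0] at hdmR
      linarith [hdmR]
    have hsur' : ∀ z ∈ closedBall x R, m ≤ surJ Jf z := by
      intro z hz
      have hz1 : dist z x ≤ R := mem_closedBall.1 hz
      have hz2 : z ∈ ball x₀ 1 := hball (mem_ball.2 (lt_of_le_of_lt hz1 hRr))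
      have hz3 : ‖z‖ ≤ ‖x₀‖ + 2 := by
        have hlt1 : ‖z - x₀‖ < 1 := by
          rw [← dist_eq_norm]; exact mem_ball.1 hz2
        calc ‖z‖ = ‖z - x₀ + x₀‖ := by rw [sub_add_cancel]
          _ ≤ ‖z - x₀‖ + ‖x₀‖ := norm_add_le _ _
          _ ≤ ‖x₀‖ + 2 := by linarith
      rw [hmdef]; exact hμle z _ hz3
    obtain ⟨z, hzball, hfz⟩ := solve_in_ball hfc hcr hR0 hm0 hsur' hdd
    exact ⟨z, mem_ball.2 (lt_of_le_of_lt (mem_closedBall.1 hzball) hRr), hfz⟩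
  · -- covering
    intro r hr y hy
    rw [mem_ball, dist_eq_norm] at hy
    have hIeq : (∫ ρ in (0:ℝ)..r, μ ρ) = I r := by
      rw [hI]
      refine intervalIntegral.integral_congr (fun ρ hρ => ?_)
      rw [uIcc_of_le hr.le] at hρ
      exact (hνeq ρ hρ.1).symm
    rw [hIeq] at hy
    set dd := ‖y - f 0‖ with hdd
    have hgap : 0 < I r - dd := by linarith
    set ζ := min (r/2) ((I r - dd)/(M + 1)) with hζdef
    have hζ0 : 0 < ζ := lt_min (by linarith) (div_pos hgap (by linarith))
    set r' := r - ζ with hr'def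
    have hζr2 : ζ ≤ r/2 := min_le_left _ _
    have hr'0 : 0 < r' := by rw [hr'def]; linarith
    have hr'r : r' < r := by rw [hr'def]; linarith
    have hIr' : dd < I r' := by
      have h1 : I r - I r' ≤ M * ζ := by
        have := hIMdiff r' r (by linarith) (by linarith)
        rw [hr'def] at this ⊢
        linarith [this]
      have h2 : M * ζ ≤ M * ((I r - dd)/(M + 1)) :=
        mul_le_mul_of_nonneg_left (min_le_right _ _) hM0
      have h3 : M * ((I r - dd)/(M + 1)) < I r - dd := by
        have e : M * ((I r - dd)/(M + 1)) = (I r - dd) * (M / (M + 1)) := by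
          field_simp
        have hfrac : M / (M + 1) < 1 := by
          rw [div_lt_one (by linarith)]; linarith
        rw [e]; nlinarith
      linarith
    obtain ⟨x, hxr, hfx⟩ := keyC r' hr'0 y hIr'
    refine ⟨x, ?_, hfx⟩
    rw [mem_ball, dist_zero_right]
    exact lt_of_le_of_lt hxr hr'r
end
end
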